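/- arXiv:1511.03817 — 4 statements merged into one kernel-verified Lean document; each statement's English description precedes it below -/
import Mathlib

section
/- There exists a constant C ≥ 1 such that for every n ≥ 1 and every x ∈ S¹, C^{−1} ≤ Σ_{y ∈ E^{−n}(x)} ((E^n)′(y))^{−1} ≤ C, where the sum ranges over the ℓ^n preimages of x under the n-th iterate E^n. -/
noncomputable section

open Filter Set Topology MeasureTheory

/-- The circle `ℝ/ℤ`. -/
abbrev 𝕊 : Type := UnitAddCircle

/-- The canonical representative in `[0,1)` of a point of the circle. -/
def rep (x : 𝕊) : ℝ := (AddCircle.equivIco 1 0 x : ℝ)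

/-- A `C^r` expanding map of the circle of degree `ℓ`, presented by a lift `ℝ → ℝ`,
together with the expansion constants `1 < λ ≤ Λ` bounding its derivative. -/
structure ExpMap (r : ℕ) (ℓ : ℕ) : Type where
  toFun : ℝ → ℝ
  contDiff : ContDiff ℝ r toFun
  degree : ∀ x : ℝ, toFun (x + 1) = toFun x + ℓ
  lam : ℝ
  Lam : ℝ
  one_lt_lam : 1 < lam
  lam_le_Lam : lam ≤ Lam
  lam_le_deriv : ∀ x : ℝ, lam ≤ deriv toFun x
  deriv_le_Lam : ∀ x : ℝ, deriv toFun x ≤ Lam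

/-- A real-valued `C^s` function on the circle, presented by a `1`-periodic lift. -/
structure CrFun (s : ℕ∞) : Type where
  toFun : ℝ → ℝ
  contDiff : ContDiff ℝ s toFun
  periodic : ∀ x : ℝ, toFun (x + 1) = toFun x

variable {r ℓ : ℕ}

/-- The induced map on the circle. -/
def ExpMap.map (E : ExpMap r ℓ) : 𝕊 → 𝕊 := fun x => ((E.toFun (rep x) : ℝ) : 𝕊)

/-- `(E^n)'(x)`, the derivative of the `n`-th iterate at a circle point. -/
def ExpMap.derivn (E : ExpMap r ℓ) (n : ℕ) (x : 𝕊) : ℝ := deriv (E.toFun^[n]) (rep x)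

/-- `‖τ'‖_∞`, the sup-norm of the derivative of `τ`. -/
def CrFun.dsup {s : ℕ∞} (τ : CrFun s) : ℝ :=
  sSup ((fun x => |deriv τ.toFun x|) '' Set.Icc (0:ℝ) 1)

/-- The skew product `f = f_{E,τ} : 𝕋² → 𝕋²`, `f(x,s) = (E x, s + τ x)`. -/
def skew (E : ExpMap r ℓ) {s : ℕ∞} (τ : CrFun s) : 𝕊 × 𝕊 → 𝕊 × 𝕊 :=
  fun z => (E.map z.1, z.2 + ((τ.toFun (rep z.1) : ℝ) : 𝕊))

/-- The Jacobian matrix `Df(z)`, depending only on the base coordinate. -/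
def Jac1 (E : ExpMap r ℓ) {s : ℕ∞} (τ : CrFun s) (x : 𝕊) : Matrix (Fin 2) (Fin 2) ℝ :=
  !![deriv E.toFun (rep x), 0; deriv τ.toFun (rep x), 1]

/-- The Jacobian matrix `Df^n(z)` of the `n`-th iterate. -/
def Jacn (E : ExpMap r ℓ) {s : ℕ∞} (τ : CrFun s) : ℕ → 𝕊 × 𝕊 → Matrix (Fin 2) (Fin 2) ℝ
  | 0, _ => 1
  | n+1, z => Jacn E τ n (skew E τ z) * Jac1 E τ z.1

/-- `Df^n` as a function of the base point only. -/
def JacnB (E : ExpMap r ℓ) {s : ℕ∞} (τ : CrFun s) (n : ℕ) (x : 𝕊) : Matrix (Fin 2) (Fin 2) ℝ :=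
  Jacn E τ n (x, (0 : 𝕊))

/-- The cone `K_R = {(ξ,η) : |η| ≤ ϑ_R |ξ|}` with `ϑ_R = R/(λ-1)`. -/
def ExpMap.cone (E : ExpMap r ℓ) (R : ℝ) : Set (Fin 2 → ℝ) :=
  {v | |v 1| ≤ R / (E.lam - 1) * |v 0|}

/-- A unit vector of `ℝ²`. -/
def IsUnitVec (v : Fin 2 → ℝ) : Prop := v 0 ^ 2 + v 1 ^ 2 = 1

/-- `𝔫(τ,R;n) = sup_z sup_v #{ζ ∈ f^{-n}(z) : v ∈ Df^n(ζ) K_R}`. -/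
def nQ (E : ExpMap r ℓ) {s : ℕ∞} (τ : CrFun s) (R : ℝ) (n : ℕ) : ℝ :=
  sSup {c : ℝ | ∃ (z : 𝕊 × 𝕊) (v : Fin 2 → ℝ), IsUnitVec v ∧
    c = ({ζ : 𝕊 × 𝕊 | (skew E τ)^[n] ζ = z ∧
      v ∈ (Jacn E τ n ζ).mulVec '' E.cone R}.ncard : ℝ)}

/-- `𝔫(τ) = lim_n 𝔫(τ,R;n)^{1/n}` (computed with the choice `R = ‖τ'‖_∞ + 1`). -/
def nlim (E : ExpMap r ℓ) {s : ℕ∞} (τ : CrFun s) : ℝ :=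
  limUnder atTop (fun n : ℕ => nQ E τ (τ.dsup + 1) n ^ ((n : ℝ)⁻¹))

/-- The `C^r` distance between two (lifts of) functions on the circle. -/
def crDist (r : ℕ) (f g : ℝ → ℝ) : ℝ :=
  sSup {c : ℝ | ∃ i ≤ r, ∃ x ∈ Set.Icc (0:ℝ) 1, c = |iteratedDeriv i f x - iteratedDeriv i g x|}

/-- `x_α`: the preimage point of `x` coded by the word `α = (α_n, …, α_1)`,
given the system `g` of inverse branches of `E`; here `α i` is the letter `α_{i+1}`. -/
def codePt (g : Fin ℓ → 𝕊 → 𝕊) : {n : ℕ} → (Fin n → Fin ℓ) → 𝕊 → 𝕊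
  | 0, _, x => x
  | n+1, α, x => g (α (Fin.last n)) (codePt g (fun i : Fin n => α i.castSucc) x)

/-- `[α]_p`, the truncation of a word to length `p`. -/
def trunc {ℓ n : ℕ} (α : Fin n → Fin ℓ) (p : ℕ) (h : p ≤ n) : Fin p → Fin ℓ :=
  fun i => α (Fin.castLE h i)

/-- `S_n(x;α;ψ) = Σ_{k=1}^n ψ'(x_{[α]_k}) / (E^k)'(x_{[α]_k})`. -/
def Ssum (E : ExpMap r ℓ) (g : Fin ℓ → 𝕊 → 𝕊) (ψ : ℝ → ℝ) {n : ℕ}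
    (α : Fin n → Fin ℓ) (x : 𝕊) : ℝ :=
  ∑ k : Fin n, deriv ψ (rep (codePt g (trunc α (k.1+1) k.isLt) x)) /
    E.derivn (k.1+1) (codePt g (trunc α (k.1+1) k.isLt) x)

/-- `S(x;ω) = Σ_{k=1}^∞ τ'(x_{[ω]_k}) / (E^k)'(x_{[ω]_k})` for an infinite word `ω`. -/
def Sinf (E : ExpMap r ℓ) (g : Fin ℓ → 𝕊 → 𝕊) (ψ : ℝ → ℝ) (y : 𝕊) (ω : ℕ → Fin ℓ) : ℝ :=
  ∑' k : ℕ, deriv ψ (rep (codePt g (fun i : Fin (k+1) => ω i) y)) /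
    E.derivn (k+1) (codePt g (fun i : Fin (k+1) => ω i) y)

/-- Faure's counting function `Ñ_{R̃}(n)`. -/
def Ntilde (E : ExpMap r ℓ) (g : Fin ℓ → 𝕊 → 𝕊) {s : ℕ∞} (τ : CrFun s) (Rt : ℝ) (n : ℕ) : ℝ :=
  sSup {c : ℝ | ∃ (y : 𝕊) (η : ℝ),
    c = ({α : Fin n → Fin ℓ | ∃ ω : ℕ → Fin ℓ, (∀ i : Fin n, ω i = α i) ∧
      |η - Sinf E g τ.toFun y ω| ≤ Rt * (E.derivn n (codePt g α y))⁻¹}.ncard : ℝ)}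

/-- `𝐧(τ,R;n)`. -/
def nnQ (E : ExpMap r ℓ) {s : ℕ∞} (τ : CrFun s) (R : ℝ) (n : ℕ) : ℝ :=
  sSup {c : ℝ | ∃ (z : 𝕊 × 𝕊) (v : Fin 2 → ℝ), IsUnitVec v ∧
    c = ∑ᶠ ζ ∈ {ζ : 𝕊 × 𝕊 | (skew E τ)^[n] ζ = z ∧
        v ∈ (Jacn E τ n ζ).mulVec '' E.cone R}, ((Jacn E τ n ζ).det)⁻¹}

/-- `𝐧(τ) = limsup_n 𝐧(τ,R;n)^{1/n}` (with `R = ‖τ'‖_∞ + 1`). -/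
def nnlim (E : ExpMap r ℓ) {s : ℕ∞} (τ : CrFun s) : ℝ :=
  limsup (fun n : ℕ => nnQ E τ (τ.dsup + 1) n ^ ((n : ℝ)⁻¹)) atTop

/-- `𝐦(τ,R;n)`. -/
def mmQ (E : ExpMap r ℓ) {s : ℕ∞} (τ : CrFun s) (R : ℝ) (n : ℕ) : ℝ :=
  sSup {c : ℝ | ∃ (z w : 𝕊 × 𝕊), (skew E τ)^[n] w = z ∧
    c = ∑ᶠ ζ ∈ {ζ : 𝕊 × 𝕊 | (skew E τ)^[n] ζ = z ∧
        ((Jacn E τ n ζ).mulVec '' E.cone R) ∩ ((Jacn E τ n w).mulVec '' E.cone R) = {0}},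
      ((Jacn E τ n ζ).det)⁻¹}

/-- `𝐦(τ) = limsup_n 𝐦(τ,R;n)^{1/n}` (with `R = ‖τ'‖_∞ + 1`). -/
def mmlim (E : ExpMap r ℓ) {s : ℕ∞} (τ : CrFun s) : ℝ :=
  limsup (fun n : ℕ => mmQ E τ (τ.dsup + 1) n ^ ((n : ℝ)⁻¹)) atTop

/-- `χ = lim_n (min_x (E^n)'(x))^{-1/n}`. -/
def chi (E : ExpMap r ℓ) : ℝ :=
  limUnder atTop (fun n : ℕ => (sInf (Set.range (E.derivn n))) ^ (-((n : ℝ)⁻¹)))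

/-- The Gram-determinant Jacobian `Jac(M) = √(det (M Mᵀ))` of a `p × m` matrix,
which equals the modulus of the Jacobian determinant of the restriction of the
associated linear map to the orthogonal complement of its kernel when the map is
surjective, and `0` otherwise. -/
def gramJac {p m : ℕ} (M : Matrix (Fin p) (Fin m) ℝ) : ℝ :=
  Real.sqrt (M * M.transpose).det

/-- The Jacobian of a linear map between Euclidean spaces. -/
def linJac {d e : ℕ} (L : EuclideanSpace ℝ (Fin d) →ₗ[ℝ] EuclideanSpace ℝ (Fin e)) : ℝ :=
  gramJac (LinearMap.toMatrix (EuclideanSpace.basisFun (Fin d) ℝ).toBasis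
    (EuclideanSpace.basisFun (Fin e) ℝ).toBasis L)


namespace Aux
variable (E : ExpMap r ℓ)

lemma lam_pos : 0 < E.lam := lt_trans one_pos E.one_lt_lam

lemma Fdiff (hr : 2 ≤ r) : Differentiable ℝ E.toFun :=
  E.contDiff.differentiable (by exact_mod_cast (show r ≠ 0 by omega))

lemma deriv_pos (hr : 2 ≤ r) (t : ℝ) : 0 < deriv E.toFun t :=
  lt_of_lt_of_le (lam_pos E) (E.lam_le_deriv t)

lemma contDiff2 (hr : 2 ≤ r) : ContDiff ℝ 2 E.toFun := E.contDiff.of_le (by exact_mod_cast hr)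

lemma deriv_contDiff (hr : 2 ≤ r) : ContDiff ℝ 1 (deriv E.toFun) := by
  have h := (contDiff_succ_iff_deriv (n := 1)).mp (by exact_mod_cast contDiff2 E hr)
  exact h.2.2

lemma deriv_deriv_cont (hr : 2 ≤ r) : Continuous (deriv (deriv E.toFun)) := by
  have h := (contDiff_succ_iff_deriv (n := 0)).mp (by exact_mod_cast deriv_contDiff E hr)
  exact h.2.2.continuous

-- degree for integer shifts
lemma deg_int (m : ℤ) (t : ℝ) : E.toFun (t + m) = E.toFun t + ℓ * m := by
  induction m using Int.induction_on with
  | zero => simp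
  | succ k ih =>
      have : E.toFun (t + ((k : ℤ) + 1 : ℤ)) = E.toFun (t + (k:ℤ) + 1) := by push_cast; ring_nf
      rw [this, E.degree, ih]; push_cast; ring
  | pred k ih =>
      have h1 : E.toFun ((t + (-(k:ℤ) - 1 : ℤ)) + 1) = E.toFun (t + (-(k:ℤ) - 1 : ℤ)) + ℓ :=
        E.degree _
      have h2 : (t + (-(k:ℤ) - 1 : ℤ)) + 1 = t + (-(k:ℤ) : ℤ) := by push_cast; ring
      rw [h2] at h1
      have := ih
      push_cast at h1 this ⊢
      linarith

lemma deriv_per (m : ℤ) (t : ℝ) : deriv E.toFun (t + m) = deriv E.toFun t := by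
  have h1 : deriv (fun s => E.toFun (s + (m:ℝ))) t = deriv E.toFun (t + m) :=
    deriv_comp_add_const _ _ _
  have h2 : (fun s => E.toFun (s + (m:ℝ))) = fun s => E.toFun s + ℓ * m := by
    funext s; exact deg_int E m s
  rw [h2] at h1
  rw [← h1, deriv_add_const]

lemma deriv_deriv_per (hr : 2 ≤ r) (m : ℤ) (t : ℝ) :
    deriv (deriv E.toFun) (t + m) = deriv (deriv E.toFun) t := by
  have h1 : deriv (fun s => deriv E.toFun (s + (m:ℝ))) t = deriv (deriv E.toFun) (t + m) :=
    deriv_comp_add_const _ _ _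
  have h2 : (fun s => deriv E.toFun (s + (m:ℝ))) = deriv E.toFun := by
    funext s; exact deriv_per E m s
  rw [h2] at h1
  exact h1.symm

/-- bound on the second derivative -/
def Mbd : ℝ := sSup ((fun t => |deriv (deriv E.toFun) t|) '' Set.Icc (0:ℝ) 1)

lemma Mbd_spec (hr : 2 ≤ r) (t : ℝ) : |deriv (deriv E.toFun) t| ≤ Mbd E := by
  have hb : BddAbove ((fun t => |deriv (deriv E.toFun) t|) '' Set.Icc (0:ℝ) 1) :=
    IsCompact.bddAbove_image isCompact_Icc ((deriv_deriv_cont E hr).abs.continuousOn)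
  have hfr : t = Int.fract t + (⌊t⌋ : ℤ) := by
    rw [Int.fract]; push_cast; ring
  have : |deriv (deriv E.toFun) t| = |deriv (deriv E.toFun) (Int.fract t)| := by
    conv_lhs => rw [hfr]
    rw [deriv_deriv_per E hr]
  rw [this]
  exact le_csSup hb ⟨Int.fract t, ⟨Int.fract_nonneg t, le_of_lt (Int.fract_lt_one t)⟩, rfl⟩

lemma Mbd_nonneg (hr : 2 ≤ r) : 0 ≤ Mbd E := le_trans (abs_nonneg _) (Mbd_spec E hr 0)

lemma lip (hr : 2 ≤ r) (a b : ℝ) :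
    |deriv E.toFun a - deriv E.toFun b| ≤ Mbd E * |a - b| := by
  have := Convex.norm_image_sub_le_of_norm_deriv_le (f := deriv E.toFun) (s := Set.univ)
    (C := Mbd E)
    (fun x _ => ((deriv_contDiff E hr).differentiable one_ne_zero) x)
    (fun x _ => by simpa using Mbd_spec E hr x) convex_univ (Set.mem_univ b) (Set.mem_univ a)
  simpa [Real.norm_eq_abs] using this

lemma fac (hr : 2 ≤ r) (a b : ℝ) :
    deriv E.toFun a ≤ deriv E.toFun b * Real.exp (Mbd E / E.lam * |a - b|) := by
  have hb : 0 < deriv E.toFun b := deriv_pos E hr b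
  have h1 : deriv E.toFun a ≤ deriv E.toFun b + Mbd E * |a - b| := by
    have h := lip E hr a b
    have h' := le_abs_self (deriv E.toFun a - deriv E.toFun b)
    linarith
  have h2 : Mbd E * |a - b| ≤ deriv E.toFun b * (Mbd E / E.lam * |a - b|) := by
    have hlam := E.lam_le_deriv b
    have hlam0 := lam_pos E
    have hM := Mbd_nonneg E hr
    have habs : (0:ℝ) ≤ |a - b| := abs_nonneg _
    have e : deriv E.toFun b * (Mbd E / E.lam * |a - b|) =
        (deriv E.toFun b / E.lam) * (Mbd E * |a - b|) := by ring
    have hd : 1 ≤ deriv E.toFun b / E.lam := (one_le_div hlam0).mpr hlam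
    rw [e]
    nlinarith [mul_nonneg hM habs]
  have h3 : deriv E.toFun b * (1 + Mbd E / E.lam * |a - b|) ≤
      deriv E.toFun b * Real.exp (Mbd E / E.lam * |a - b|) := by
    apply mul_le_mul_of_nonneg_left _ (le_of_lt hb)
    have := Real.add_one_le_exp (Mbd E / E.lam * |a - b|)
    linarith
  calc deriv E.toFun a ≤ deriv E.toFun b + Mbd E * |a - b| := h1
    _ ≤ deriv E.toFun b * (1 + Mbd E / E.lam * |a - b|) := by rw [mul_add, mul_one]; linarith
    _ ≤ _ := h3

end Aux
namespace Aux
variable (E : ExpMap r ℓ)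

lemma hasDerivAt_iter (hr : 2 ≤ r) (n : ℕ) (t : ℝ) :
    HasDerivAt (E.toFun^[n]) (∏ k ∈ Finset.range n, deriv E.toFun (E.toFun^[k] t)) t := by
  induction n with
  | zero => simpa using hasDerivAt_id t
  | succ n ih =>
      have hF : HasDerivAt E.toFun (deriv E.toFun (E.toFun^[n] t)) (E.toFun^[n] t) :=
        (Fdiff E hr (E.toFun^[n] t)).hasDerivAt
      have := hF.comp t ih
      rw [Function.iterate_succ']
      rw [Finset.prod_range_succ, mul_comm]
      exact this

lemma deriv_iter (hr : 2 ≤ r) (n : ℕ) (t : ℝ) :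
    deriv (E.toFun^[n]) t = ∏ k ∈ Finset.range n, deriv E.toFun (E.toFun^[k] t) :=
  (hasDerivAt_iter E hr n t).deriv

lemma deriv_iter_pos (hr : 2 ≤ r) (n : ℕ) (t : ℝ) : 0 < deriv (E.toFun^[n]) t := by
  rw [deriv_iter E hr]
  exact Finset.prod_pos (fun k _ => deriv_pos E hr _)

lemma expand1 (hr : 2 ≤ r) {a b : ℝ} (h : a ≤ b) :
    E.lam * (b - a) ≤ E.toFun b - E.toFun a := by
  rcases eq_or_lt_of_le h with rfl | hlt
  · simp only [sub_self, mul_zero, le_refl]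
  · obtain ⟨c, _, hc⟩ := exists_deriv_eq_slope E.toFun hlt
      ((Fdiff E hr).continuous.continuousOn) ((Fdiff E hr).differentiableOn)
    have h1 : E.toFun b - E.toFun a = deriv E.toFun c * (b - a) := by
      rw [hc, div_mul_cancel₀ _ (ne_of_gt (sub_pos.mpr hlt))]
    rw [h1]
    have := E.lam_le_deriv c
    nlinarith

lemma expand (hr : 2 ≤ r) (n : ℕ) {a b : ℝ} (h : a ≤ b) :
    E.lam ^ n * (b - a) ≤ E.toFun^[n] b - E.toFun^[n] a := by
  induction n with
  | zero => simp
  | succ n ih =>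
      have hmono : E.toFun^[n] a ≤ E.toFun^[n] b := by
        nlinarith [pow_pos (lam_pos E) n, ih]
      have h1 := expand1 E hr hmono
      have h2 : E.lam * (E.lam ^ n * (b - a)) ≤ E.lam * (E.toFun^[n] b - E.toFun^[n] a) :=
        mul_le_mul_of_nonneg_left ih (le_of_lt (lam_pos E))
      rw [Function.iterate_succ_apply', Function.iterate_succ_apply']
      calc E.lam ^ (n+1) * (b - a) = E.lam * (E.lam ^ n * (b - a)) := by ring
        _ ≤ E.lam * (E.toFun^[n] b - E.toFun^[n] a) := h2
        _ ≤ _ := h1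

lemma iter_strictMono (hr : 2 ≤ r) (n : ℕ) : StrictMono (E.toFun^[n]) := by
  intro a b hab
  have := expand E hr n (le_of_lt hab)
  nlinarith [pow_pos (lam_pos E) n]

lemma iter_deg (n : ℕ) : ∀ (m : ℤ) (t : ℝ),
    E.toFun^[n] (t + m) = E.toFun^[n] t + (ℓ:ℝ) ^ n * m := by
  induction n with
  | zero => simp
  | succ n ih =>
      intro m t
      rw [Function.iterate_succ_apply, deg_int E m t]
      have h1 : E.toFun t + (ℓ:ℝ) * m = E.toFun t + ((ℓ * m : ℤ) : ℝ) := by push_cast; ring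
      rw [Function.iterate_succ_apply, h1, ih]
      push_cast; ring

lemma iter_cont (hr : 2 ≤ r) (n : ℕ) : Continuous (E.toFun^[n]) := by
  induction n with
  | zero => simpa using continuous_id
  | succ n ih => rw [Function.iterate_succ']; exact (Fdiff E hr).continuous.comp ih

lemma iter_surj (hr : 2 ≤ r) (n : ℕ) (hl : 2 ≤ ℓ) (c : ℝ) : ∃ t, E.toFun^[n] t = c := by
  set m : ℕ := ⌈|c - E.toFun^[n] 0|⌉₊ with hm
  have hm1 : |c - E.toFun^[n] 0| ≤ m := Nat.le_ceil _
  have hl1 : (1:ℝ) ≤ (ℓ:ℝ)^n := one_le_pow₀ (by exact_mod_cast Nat.one_le_of_lt hl)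
  have hlo : E.toFun^[n] (-(m:ℝ)) ≤ c := by
    have := iter_deg E n (-(m:ℤ)) 0
    simp only [zero_add] at this
    push_cast at this
    rw [this]
    have h1 : (m:ℝ) ≤ (ℓ:ℝ)^n * m := by nlinarith [Nat.cast_nonneg (α := ℝ) m]
    have := abs_le.mp hm1
    linarith
  have hhi : c ≤ E.toFun^[n] ((m:ℝ)) := by
    have := iter_deg E n (m:ℤ) 0
    simp only [zero_add] at this
    push_cast at this
    rw [this]
    have h1 : (m:ℝ) ≤ (ℓ:ℝ)^n * m := by nlinarith [Nat.cast_nonneg (α := ℝ) m]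
    have := abs_le.mp hm1
    linarith
  have hcont : ContinuousOn (E.toFun^[n]) (Set.Icc (-(m:ℝ)) m) :=
    (iter_cont E hr n).continuousOn
  have hmem : c ∈ Set.Icc (E.toFun^[n] (-(m:ℝ))) (E.toFun^[n] (m:ℝ)) := ⟨hlo, hhi⟩
  have := intermediate_value_Icc (neg_le_self (Nat.cast_nonneg m)) hcont hmem
  obtain ⟨t, _, ht⟩ := this
  exact ⟨t, ht⟩

/-- distortion constant -/
def Dst : ℝ := Real.exp (Mbd E / E.lam * (E.lam - 1)⁻¹)

lemma Dst_one_le (hr : 2 ≤ r) : 1 ≤ Dst E := by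
  rw [Dst]
  apply Real.one_le_exp
  have h1 : 0 < E.lam - 1 := by have := E.one_lt_lam; linarith
  exact mul_nonneg (div_nonneg (Mbd_nonneg E hr) (le_of_lt (lam_pos E)))
    (inv_nonneg.mpr (le_of_lt h1))

lemma geom_bound (n : ℕ) : ∑ k ∈ Finset.range n, (E.lam ^ (n - k))⁻¹ ≤ (E.lam - 1)⁻¹ := by
  have hlam := E.one_lt_lam
  have h0 : (0:ℝ) < E.lam := lam_pos E
  have hr1 : (0:ℝ) ≤ E.lam⁻¹ := by positivity
  have hr2 : E.lam⁻¹ < 1 := by rw [inv_lt_one_iff₀]; right; exact hlam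
  have hre : ∑ k ∈ Finset.range n, (E.lam ^ (n - k))⁻¹
      = ∑ k ∈ Finset.range n, E.lam⁻¹ * (E.lam⁻¹)^k := by
    rw [← Finset.sum_range_reflect]
    apply Finset.sum_congr rfl
    intro k hk
    rw [Finset.mem_range] at hk
    have : n - (n - 1 - k) = k + 1 := by omega
    rw [this, pow_succ, mul_inv, inv_pow, mul_comm]
  rw [hre, ← Finset.mul_sum]
  have hsum : ∑ k ∈ Finset.range n, (E.lam⁻¹)^k ≤ (1 - E.lam⁻¹)⁻¹ := by
    have := Summable.sum_le_tsum (f := fun k : ℕ => (E.lam⁻¹)^k) (Finset.range n)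
      (fun i _ => by positivity) (summable_geometric_of_lt_one hr1 hr2)
    rwa [tsum_geometric_of_lt_one hr1 hr2] at this
  have hq : E.lam⁻¹ * (1 - E.lam⁻¹)⁻¹ = (E.lam - 1)⁻¹ := by
    rw [← mul_inv]
    congr 1
    field_simp
  calc E.lam⁻¹ * ∑ k ∈ Finset.range n, (E.lam⁻¹)^k ≤ E.lam⁻¹ * (1 - E.lam⁻¹)⁻¹ :=
        mul_le_mul_of_nonneg_left hsum hr1
    _ = _ := hq

lemma distortion (hr : 2 ≤ r) (n : ℕ) {y z : ℝ}
    (h : |E.toFun^[n] y - E.toFun^[n] z| ≤ 1) :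
    deriv (E.toFun^[n]) y ≤ Dst E * deriv (E.toFun^[n]) z := by
  have hlam := E.one_lt_lam
  have key : ∀ k ∈ Finset.range n, |E.toFun^[k] y - E.toFun^[k] z| ≤ (E.lam ^ (n - k))⁻¹ := by
    intro k hk
    rw [Finset.mem_range] at hk
    have hcomp : ∀ w, E.toFun^[n] w = E.toFun^[n-k] (E.toFun^[k] w) := by
      intro w
      rw [← Function.iterate_add_apply]
      congr 1
      omega
    rcases le_total (E.toFun^[k] z) (E.toFun^[k] y) with hle | hle
    · have := expand E hr (n-k) hle
      rw [← hcomp, ← hcomp] at this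
      have h2 : E.toFun^[n] z ≤ E.toFun^[n] y := (iter_strictMono E hr n).le_iff_le.mpr ?hz
      case hz => exact ((iter_strictMono E hr k).le_iff_le.mp hle : z ≤ y)
      have h3 : E.toFun^[n] y - E.toFun^[n] z ≤ 1 := by
        have := abs_le.mp h; linarith
      rw [abs_of_nonneg (by linarith)]
      rw [inv_eq_one_div, le_div_iff₀ (by positivity)]
      nlinarith
    · have := expand E hr (n-k) hle
      rw [← hcomp, ← hcomp] at this
      have h3 : E.toFun^[n] z - E.toFun^[n] y ≤ 1 := by
        have := abs_le.mp h; linarith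
      rw [abs_of_nonpos (by linarith), neg_sub]
      rw [inv_eq_one_div, le_div_iff₀ (by positivity)]
      nlinarith
  rw [deriv_iter E hr, deriv_iter E hr]
  have step : ∀ k ∈ Finset.range n,
      deriv E.toFun (E.toFun^[k] y) ≤
        deriv E.toFun (E.toFun^[k] z) *
          Real.exp (Mbd E / E.lam * |E.toFun^[k] y - E.toFun^[k] z|) :=
    fun k _ => fac E hr _ _
  calc ∏ k ∈ Finset.range n, deriv E.toFun (E.toFun^[k] y)
      ≤ ∏ k ∈ Finset.range n, (deriv E.toFun (E.toFun^[k] z) *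
          Real.exp (Mbd E / E.lam * |E.toFun^[k] y - E.toFun^[k] z|)) := by
        apply Finset.prod_le_prod
        · intro k _; exact le_of_lt (deriv_pos E hr _)
        · exact step
    _ = (∏ k ∈ Finset.range n, deriv E.toFun (E.toFun^[k] z)) *
          Real.exp (∑ k ∈ Finset.range n, Mbd E / E.lam * |E.toFun^[k] y - E.toFun^[k] z|) := by
        rw [Finset.prod_mul_distrib, Real.exp_sum]
    _ ≤ (∏ k ∈ Finset.range n, deriv E.toFun (E.toFun^[k] z)) * Dst E := by
        apply mul_le_mul_of_nonneg_left _ (Finset.prod_nonneg (fun k _ => le_of_lt (deriv_pos E hr _)))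
        rw [Dst]
        apply Real.exp_le_exp.mpr
        rw [← Finset.mul_sum]
        have hMl : 0 ≤ Mbd E / E.lam := div_nonneg (Mbd_nonneg E hr) (le_of_lt (lam_pos E))
        have hs : ∑ k ∈ Finset.range n, |E.toFun^[k] y - E.toFun^[k] z|
            ≤ (E.lam - 1)⁻¹ := by
          calc ∑ k ∈ Finset.range n, |E.toFun^[k] y - E.toFun^[k] z|
              ≤ ∑ k ∈ Finset.range n, (E.lam ^ (n - k))⁻¹ := Finset.sum_le_sum key
            _ ≤ _ := geom_bound E n
        exact mul_le_mul_of_nonneg_left hs hMl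
    _ = _ := by ring

end Aux
namespace Aux
variable (E : ExpMap r ℓ)

lemma coe_int_zero (m : ℤ) : (((m:ℝ) : 𝕊)) = 0 :=
  (AddCircle.coe_eq_zero_iff 1).mpr ⟨m, by simp⟩

lemma coe_add_int (t : ℝ) (m : ℤ) : ((t + m : ℝ) : 𝕊) = (t : 𝕊) := by
  have : ((t + m : ℝ) : 𝕊) = (t : 𝕊) + ((m:ℝ) : 𝕊) := by
    push_cast; rfl
  rw [this, coe_int_zero, add_zero]

lemma rep_coe (t : ℝ) : rep ((t : ℝ) : 𝕊) = Int.fract t := by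
  rw [rep]
  have := AddCircle.coe_equivIco_mk_apply (p := (1:ℝ)) t
  simpa using this

lemma coe_rep (x : 𝕊) : ((rep x : ℝ) : 𝕊) = x := by
  induction x using QuotientAddGroup.induction_on with
  | H t =>
      rw [rep_coe]
      have : Int.fract t = t + (-⌊t⌋ : ℤ) := by rw [Int.fract]; push_cast; ring
      rw [this, coe_add_int]

lemma map_coe (t : ℝ) : E.map ((t:ℝ) : 𝕊) = ((E.toFun t : ℝ) : 𝕊) := by
  rw [ExpMap.map, rep_coe]
  have h1 : E.toFun t = E.toFun (Int.fract t + (⌊t⌋ : ℤ)) := by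
    congr 1
    rw [Int.fract]; push_cast; ring
  have h2 : E.toFun (Int.fract t + (⌊t⌋:ℤ)) = E.toFun (Int.fract t) + (ℓ:ℝ) * ⌊t⌋ :=
    deg_int E _ _
  rw [h1, h2]
  have : E.toFun (Int.fract t) + (ℓ:ℝ) * ⌊t⌋ = E.toFun (Int.fract t) + ((ℓ * ⌊t⌋ : ℤ):ℝ) := by
    push_cast; ring
  rw [this, coe_add_int]

lemma map_iter_coe (n : ℕ) (t : ℝ) : E.map^[n] ((t:ℝ) : 𝕊) = ((E.toFun^[n] t : ℝ) : 𝕊) := by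
  induction n generalizing t with
  | zero => simp
  | succ n ih =>
      rw [Function.iterate_succ_apply, Function.iterate_succ_apply, map_coe, ih]

lemma deriv_iter_per (hr : 2 ≤ r) (n : ℕ) (m : ℤ) (t : ℝ) :
    deriv (E.toFun^[n]) (t + m) = deriv (E.toFun^[n]) t := by
  have h1 : deriv (fun s => E.toFun^[n] (s + (m:ℝ))) t = deriv (E.toFun^[n]) (t + m) :=
    deriv_comp_add_const _ _ _
  have h2 : (fun s => E.toFun^[n] (s + (m:ℝ))) = fun s => E.toFun^[n] s + (ℓ:ℝ)^n * m := by
    funext s; exact iter_deg E n m s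
  rw [h2] at h1
  rw [← h1, deriv_add_const]

lemma derivn_coe (hr : 2 ≤ r) (n : ℕ) (t : ℝ) :
    E.derivn n ((t:ℝ) : 𝕊) = deriv (E.toFun^[n]) t := by
  rw [ExpMap.derivn, rep_coe]
  have h1 : t = Int.fract t + (⌊t⌋ : ℤ) := by rw [Int.fract]; push_cast; ring
  conv_rhs => rw [h1]
  rw [deriv_iter_per E hr]

lemma coe_eq_coe_iff (s t : ℝ) : ((s:ℝ) : 𝕊) = ((t:ℝ) : 𝕊) ↔ ∃ m : ℤ, s = t + m := by
  constructor
  · intro h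
    have : ((s - t : ℝ) : 𝕊) = 0 := by
      have : ((s - t : ℝ) : 𝕊) = (s : 𝕊) - (t : 𝕊) := by push_cast; rfl
      rw [this, h, sub_self]
    obtain ⟨m, hm⟩ := (AddCircle.coe_eq_zero_iff 1).mp this
    exact ⟨m, by simp at hm; linarith⟩
  · rintro ⟨m, rfl⟩
    exact (coe_add_int t m)

end Aux

/-- distortion bound. There is a constant `C ≥ 1` such that for every
`n ≥ 1` and every `x ∈ 𝕊¹`, `C⁻¹ ≤ Σ_{y ∈ E^{-n}(x)} ((E^n)'(y))⁻¹ ≤ C`. -/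
theorem stmt6 (r ℓ : ℕ) (hr : 2 ≤ r) (hl : 2 ≤ ℓ) (E : ExpMap r ℓ) :
    ∃ C : ℝ, 1 ≤ C ∧ ∀ n : ℕ, 1 ≤ n → ∀ x : 𝕊,
      C⁻¹ ≤ ∑ᶠ y ∈ {y : 𝕊 | E.map^[n] y = x}, (E.derivn n y)⁻¹ ∧
      ∑ᶠ y ∈ {y : 𝕊 | E.map^[n] y = x}, (E.derivn n y)⁻¹ ≤ C := by
  classical
  refine ⟨Aux.Dst E, Aux.Dst_one_le E hr, ?_⟩
  intro n _ x
  have hN1 : 1 ≤ ℓ ^ n := Nat.one_le_pow _ _ (by omega)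
  set N : ℕ := ℓ ^ n with hNdef
  set a : ℝ := rep x with ha
  have hax : ((a : ℝ) : 𝕊) = x := Aux.coe_rep x
  have Ginj : Function.Injective (E.toFun^[n]) := (Aux.iter_strictMono E hr n).injective
  have hsur : ∀ c : ℝ, ∃ t, E.toFun^[n] t = c := Aux.iter_surj E hr n hl
  choose u hu using fun m : ℤ => hsur (a + m)
  have ushift : ∀ (m q : ℤ), u (m + q * N) = u m + q := by
    intro m q
    apply Ginj
    rw [hu]
    have h1 : E.toFun^[n] (u m + (q:ℝ)) = E.toFun^[n] (u m) + (ℓ:ℝ)^n * q :=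
      Aux.iter_deg E n q (u m)
    rw [h1, hu]
    push_cast [hNdef]
    ring
  have umono : ∀ m m' : ℤ, m < m' → u m < u m' := by
    intro m m' h
    have h2 : E.toFun^[n] (u m) < E.toFun^[n] (u m') := by
      rw [hu, hu]
      have : (m:ℝ) < (m':ℝ) := by exact_mod_cast h
      linarith
    exact ((Aux.iter_strictMono E hr n).lt_iff_lt).mp h2
  -- identify the fiber
  set T : Finset 𝕊 := (Finset.range N).image (fun m : ℕ => ((u m : ℝ) : 𝕊)) with hT
  have hfiber : {y : 𝕊 | E.map^[n] y = x} = ↑T := by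
    ext y
    simp only [Set.mem_setOf_eq, hT, Finset.coe_image, Set.mem_image, Finset.mem_coe,
      Finset.mem_range]
    constructor
    · intro hy
      obtain ⟨t, rfl⟩ := QuotientAddGroup.mk_surjective y
      rw [show (QuotientAddGroup.mk t : 𝕊) = ((t:ℝ) : 𝕊) from rfl] at hy ⊢
      rw [Aux.map_iter_coe E n t, ← hax] at hy
      obtain ⟨m, hm⟩ := (Aux.coe_eq_coe_iff _ _).mp hy
      have ht : t = u m := Ginj (by rw [hu]; exact hm)
      have hmod0 : 0 ≤ m % N := Int.emod_nonneg m (by exact_mod_cast (show N ≠ 0 by omega))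
      have hmodlt : m % N < N := Int.emod_lt_of_pos m (by exact_mod_cast (show 0 < N by omega))
      refine ⟨(m % N).toNat, by omega, ?_⟩
      have hcast : (((m % N).toNat : ℕ) : ℤ) = m % N := Int.toNat_of_nonneg hmod0
      rw [hcast, ht]
      have hdec : u m = u (m % N) + ((m / N : ℤ) : ℝ) := by
        conv_lhs => rw [show m = m % N + (m / N) * N by
          have := Int.emod_add_mul_ediv m N; linarith]
        exact ushift _ _
      rw [hdec]
      exact (Aux.coe_add_int _ _).symm
    · rintro ⟨m, hm, rfl⟩
      rw [Aux.map_iter_coe E n (u m), hu (m:ℤ), Aux.coe_add_int a (m:ℤ), hax]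
  rw [hfiber, finsum_mem_coe_finset]
  have hinj : ∀ m ∈ Finset.range N, ∀ m' ∈ Finset.range N,
      ((u m : ℝ) : 𝕊) = ((u m' : ℝ) : 𝕊) → m = m' := by
    intro m hm m' hm' h
    obtain ⟨q, hq⟩ := (Aux.coe_eq_coe_iff _ _).mp h
    have h2 : u ((m':ℤ) + q * N) = u m' + q := ushift _ _
    have h3 : (m:ℤ) = m' + q * N := by
      have h4 : u (m:ℤ) = u ((m':ℤ) + q * N) := by rw [h2, ← hq]
      have h5 := congrArg (E.toFun^[n]) h4
      rw [hu, hu] at h5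
      have h6 : (m:ℝ) = ((m' + q*(N:ℤ) : ℤ) : ℝ) := by push_cast at h5 ⊢; linarith
      exact_mod_cast h6
    rw [Finset.mem_range] at hm hm'
    have hmN : (m:ℤ) < N := by exact_mod_cast hm
    have hm'N : (m':ℤ) < N := by exact_mod_cast hm'
    have hm0 : (0:ℤ) ≤ m := Int.natCast_nonneg m
    have hm'0 : (0:ℤ) ≤ m' := Int.natCast_nonneg m'
    have hNZ : (1:ℤ) ≤ N := by exact_mod_cast hN1
    rcases lt_trichotomy q 0 with h0 | h0 | h0
    · exfalso; have hq1 : q ≤ -1 := by omega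
      nlinarith
    · subst h0; omega
    · exfalso; have hq1 : 1 ≤ q := by omega
      nlinarith
  rw [Finset.sum_image hinj]
  have hderiv : ∀ m : ℕ, E.derivn n ((u m : ℝ) : 𝕊) = deriv (E.toFun^[n]) (u m) :=
    fun m => Aux.derivn_coe E hr n (u m)
  set D := Aux.Dst E with hD
  have hD1 : 1 ≤ D := Aux.Dst_one_le E hr
  have hD0 : 0 < D := lt_of_lt_of_le one_pos hD1
  have hkey : ∀ m : ℕ,
      D⁻¹ * (u ((m:ℤ)+1) - u (m:ℤ)) ≤ (deriv (E.toFun^[n]) (u (m:ℤ)))⁻¹ ∧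
      (deriv (E.toFun^[n]) (u (m:ℤ)))⁻¹ ≤ D * (u ((m:ℤ)+1) - u (m:ℤ)) := by
    intro m
    have hlt : u (m:ℤ) < u ((m:ℤ)+1) := umono _ _ (by omega)
    have hδ : 0 < u ((m:ℤ)+1) - u (m:ℤ) := by linarith
    obtain ⟨ξ, hξmem, hξ⟩ := exists_deriv_eq_slope (E.toFun^[n]) hlt
      (Aux.iter_cont E hr n).continuousOn
      (fun t _ => (Aux.hasDerivAt_iter E hr n t).differentiableAt.differentiableWithinAt)
    have hGm : E.toFun^[n] (u ((m:ℤ)+1)) - E.toFun^[n] (u (m:ℤ)) = 1 := by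
      rw [hu, hu]; push_cast; ring
    have hslope : deriv (E.toFun^[n]) ξ = (u ((m:ℤ)+1) - u (m:ℤ))⁻¹ := by
      rw [hξ, hGm, one_div]
    obtain ⟨hξ1, hξ2⟩ := hξmem
    have h1 : E.toFun^[n] (u (m:ℤ)) < E.toFun^[n] ξ := (Aux.iter_strictMono E hr n) hξ1
    have h2 : E.toFun^[n] ξ < E.toFun^[n] (u ((m:ℤ)+1)) := (Aux.iter_strictMono E hr n) hξ2
    have habs : |E.toFun^[n] ξ - E.toFun^[n] (u (m:ℤ))| ≤ 1 := by
      rw [abs_of_nonneg (by linarith)]; linarith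
    have d1 : deriv (E.toFun^[n]) ξ ≤ D * deriv (E.toFun^[n]) (u (m:ℤ)) :=
      Aux.distortion E hr n habs
    have d2 : deriv (E.toFun^[n]) (u (m:ℤ)) ≤ D * deriv (E.toFun^[n]) ξ :=
      Aux.distortion E hr n (by rwa [abs_sub_comm] at habs)
    have hpm := Aux.deriv_iter_pos E hr n (u (m:ℤ))
    constructor
    · rw [hslope] at d2
      rw [inv_eq_one_div (deriv (E.toFun^[n]) (u (m:ℤ))), le_div_iff₀ hpm]
      have h5 : (D⁻¹ * (u ((m:ℤ)+1) - u (m:ℤ))) * deriv (E.toFun^[n]) (u (m:ℤ)) ≤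
          (D⁻¹ * (u ((m:ℤ)+1) - u (m:ℤ))) * (D * (u ((m:ℤ)+1) - u (m:ℤ))⁻¹) :=
        mul_le_mul_of_nonneg_left d2 (by positivity)
      have h6 : (D⁻¹ * (u ((m:ℤ)+1) - u (m:ℤ))) * (D * (u ((m:ℤ)+1) - u (m:ℤ))⁻¹) = 1 := by
        field_simp
      linarith
    · rw [hslope] at d1
      rw [inv_eq_one_div (deriv (E.toFun^[n]) (u (m:ℤ))), div_le_iff₀ hpm]
      have h5 : (u ((m:ℤ)+1) - u (m:ℤ)) * (u ((m:ℤ)+1) - u (m:ℤ))⁻¹ ≤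
          (u ((m:ℤ)+1) - u (m:ℤ)) * (D * deriv (E.toFun^[n]) (u (m:ℤ))) :=
        mul_le_mul_of_nonneg_left d1 (le_of_lt hδ)
      rw [mul_inv_cancel₀ (ne_of_gt hδ)] at h5
      linarith [h5]
  have htel : ∑ m ∈ Finset.range N, (u ((m:ℤ)+1) - u (m:ℤ)) = 1 := by
    have hsum := Finset.sum_range_sub (fun m : ℕ => u (m:ℤ)) N
    have hcongr : ∑ m ∈ Finset.range N, (u ((m:ℤ)+1) - u (m:ℤ)) =
        ∑ m ∈ Finset.range N, ((fun m : ℕ => u (m:ℤ)) (m+1) - (fun m : ℕ => u (m:ℤ)) m) := by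
      apply Finset.sum_congr rfl
      intro k _
      norm_num
    have h2 : u ((N:ℤ)) = u 0 + 1 := by
      have := ushift 0 1
      simpa using this
    rw [hcongr, hsum, h2]
    ring
  constructor
  · have he : D⁻¹ = D⁻¹ * ∑ m ∈ Finset.range N, (u ((m:ℤ)+1) - u (m:ℤ)) := by
      rw [htel, mul_one]
    rw [he, Finset.mul_sum]
    apply Finset.sum_le_sum
    intro m _
    rw [hderiv m]
    exact (hkey m).1
  · have he : D = D * ∑ m ∈ Finset.range N, (u ((m:ℤ)+1) - u (m:ℤ)) := by
      rw [htel, mul_one]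
    rw [he, Finset.mul_sum]
    apply Finset.sum_le_sum
    intro m _
    rw [hderiv m]
    exact (hkey m).2
end
end

section
/- There exists a constant C > 0 such that for every x ∈ S¹, every b > 0 and every n ≥ 1, the number of preimages y ∈ E^{−n}(x) with (E^n)′(y) ≤ e^{bn} is at most C e^{bn}. -/
noncomputable section

open Filter Set Topology MeasureTheory

variable {r ℓ : ℕ}

private lemma stmt7_deriv_iterate (F : ℝ → ℝ) (hF : Differentiable ℝ F) (n : ℕ) (t : ℝ) :
    deriv (F^[n]) t = ∏ k ∈ Finset.range n, deriv F (F^[k] t) := by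
  induction n with
  | zero => simp
  | succ n ih =>
    rw [Function.iterate_succ', Finset.prod_range_succ, ← ih]
    have := deriv_comp (x := t) (hF (F^[n] t)) ((hF.iterate n) t)
    rw [this]; ring

private lemma stmt7_expand (F : ℝ → ℝ) (hF : Differentiable ℝ F) (lam : ℝ)
    (hlam : 1 < lam) (hlo : ∀ x, lam ≤ deriv F x) (n : ℕ) :
    ∀ a b : ℝ, a ≤ b → lam ^ n * (b - a) ≤ F^[n] b - F^[n] a := by
  have step : ∀ a b : ℝ, a ≤ b → lam * (b - a) ≤ F b - F a := by
    intro a b hab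
    have := Convex.mul_sub_le_image_sub_of_le_deriv (convex_univ (𝕜 := ℝ))
      hF.continuous.continuousOn
      (hF.differentiableOn.mono interior_subset)
      (fun x _ => hlo x) a trivial b trivial hab
    exact this
  induction n with
  | zero => intro a b hab; simpa using hab
  | succ n ih =>
    intro a b hab
    have h1 := ih a b hab
    have hmono : F^[n] a ≤ F^[n] b := by nlinarith [pow_pos (lt_trans one_pos hlam) n]
    have h2 := step _ _ hmono
    rw [Function.iterate_succ_apply', Function.iterate_succ_apply']
    calc lam ^ (n+1) * (b - a) = lam * (lam ^ n * (b - a)) := by ring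
    _ ≤ lam * (F^[n] b - F^[n] a) := by
        have : (0:ℝ) < lam := lt_trans one_pos hlam
        nlinarith
    _ ≤ F (F^[n] b) - F (F^[n] a) := h2

private lemma stmt7_geom (lam : ℝ) (hlam : 1 < lam) (n : ℕ) :
    ∑ j ∈ Finset.range n, (lam ^ (j + 1))⁻¹ ≤ (lam - 1)⁻¹ := by
  have h0 : (0:ℝ) < lam := lt_trans one_pos hlam
  have key : ∀ n : ℕ, ∑ j ∈ Finset.range n, (lam ^ (j + 1))⁻¹
      ≤ (lam - 1)⁻¹ * (1 - (lam ^ n)⁻¹) := by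
    intro n
    induction n with
    | zero => simp
    | succ n ih =>
      rw [Finset.sum_range_succ]
      have hp : (0:ℝ) < lam ^ n := pow_pos h0 n
      have hp1 : (0:ℝ) < lam ^ (n+1) := pow_pos h0 (n+1)
      have hs : lam ^ (n+1) = lam ^ n * lam := pow_succ lam n
      have e1 : (lam - 1)⁻¹ * (1 - (lam ^ (n+1))⁻¹)
          = (lam - 1)⁻¹ * (1 - (lam ^ n)⁻¹) + (lam ^ (n+1))⁻¹ := by
        rw [hs]
        have hl1 : lam - 1 ≠ 0 := by intro h; rw [sub_eq_zero] at h; exact absurd h.symm (ne_of_lt hlam)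
        field_simp
        ring
      rw [e1]
      linarith
  have hn := key n
  have : (0:ℝ) ≤ (lam ^ n)⁻¹ := inv_nonneg.mpr (le_of_lt (pow_pos h0 n))
  have h1 : (0:ℝ) < (lam - 1)⁻¹ := inv_pos.mpr (by linarith)
  nlinarith


private lemma stmt7_distortion (F : ℝ → ℝ) (hF : Differentiable ℝ F) (lam M : ℝ)
    (hlam : 1 < lam) (hM : 0 ≤ M)
    (hlo : ∀ x, lam ≤ deriv F x)
    (hlip : ∀ a b : ℝ, |deriv F a - deriv F b| ≤ M * |a - b|)
    (n : ℕ) (t η : ℝ)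
    (h : ∀ k, k < n → |F^[k] η - F^[k] t| ≤ (lam ^ (n - k))⁻¹) :
    deriv (F^[n]) η ≤ Real.exp (M / (lam * (lam - 1))) * deriv (F^[n]) t := by
  have h0 : (0:ℝ) < lam := lt_trans one_pos hlam
  rw [stmt7_deriv_iterate F hF, stmt7_deriv_iterate F hF]
  have key : ∀ k ∈ Finset.range n,
      deriv F (F^[k] η) ≤ deriv F (F^[k] t) * Real.exp (M / lam * (lam ^ (n - k))⁻¹) := by
    intro k hk
    have hk' := Finset.mem_range.mp hk
    have hd : (0:ℝ) < (lam ^ (n - k))⁻¹ := inv_pos.mpr (pow_pos h0 _)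
    have h1 : deriv F (F^[k] η) ≤ deriv F (F^[k] t) + M * (lam ^ (n - k))⁻¹ := by
      have := hlip (F^[k] η) (F^[k] t)
      have h2 : M * |F^[k] η - F^[k] t| ≤ M * (lam ^ (n - k))⁻¹ :=
        mul_le_mul_of_nonneg_left (h k hk') hM
      have h3 := abs_le.mp (le_trans this h2)
      linarith [h3.1, h3.2]
    have h4 : lam ≤ deriv F (F^[k] t) := hlo _
    have h5 : 1 + M / lam * (lam ^ (n - k))⁻¹ ≤ Real.exp (M / lam * (lam ^ (n - k))⁻¹) :=
      Real.add_one_le_exp _ |>.trans_eq' (by ring)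
    have h6 : deriv F (F^[k] t) + M * (lam ^ (n - k))⁻¹
        ≤ deriv F (F^[k] t) * (1 + M / lam * (lam ^ (n - k))⁻¹) := by
      have hexp : deriv F (F^[k] t) * (M / lam * (lam ^ (n - k))⁻¹)
          ≥ lam * (M / lam * (lam ^ (n - k))⁻¹) := by
        apply mul_le_mul_of_nonneg_right h4
        positivity
      have : lam * (M / lam * (lam ^ (n - k))⁻¹) = M * (lam ^ (n - k))⁻¹ := by
        field_simp
      nlinarith
    calc deriv F (F^[k] η) ≤ deriv F (F^[k] t) + M * (lam ^ (n - k))⁻¹ := h1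
    _ ≤ deriv F (F^[k] t) * (1 + M / lam * (lam ^ (n - k))⁻¹) := h6
    _ ≤ deriv F (F^[k] t) * Real.exp (M / lam * (lam ^ (n - k))⁻¹) := by
        apply mul_le_mul_of_nonneg_left h5 (le_trans (by linarith) h4)
  calc ∏ k ∈ Finset.range n, deriv F (F^[k] η)
      ≤ ∏ k ∈ Finset.range n, deriv F (F^[k] t) * Real.exp (M / lam * (lam ^ (n - k))⁻¹) := by
        apply Finset.prod_le_prod
        · intro k _; linarith [hlo (F^[k] η)]
        · exact key
  _ = (∏ k ∈ Finset.range n, deriv F (F^[k] t))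
        * Real.exp (∑ k ∈ Finset.range n, M / lam * (lam ^ (n - k))⁻¹) := by
        rw [Finset.prod_mul_distrib, Real.exp_sum]
  _ ≤ Real.exp (M / (lam * (lam - 1))) * ∏ k ∈ Finset.range n, deriv F (F^[k] t) := by
        rw [mul_comm]
        apply mul_le_mul_of_nonneg_right _ (Finset.prod_nonneg fun k _ => le_trans (by linarith) (hlo _))
        apply Real.exp_le_exp.mpr
        rw [← Finset.mul_sum]
        have hsum : ∑ k ∈ Finset.range n, (lam ^ (n - k))⁻¹
            = ∑ j ∈ Finset.range n, (lam ^ (j + 1))⁻¹ := by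
          rw [← Finset.sum_range_reflect (fun j => (lam ^ (j + 1))⁻¹) n]
          apply Finset.sum_congr rfl
          intro k hk
          have hk' := Finset.mem_range.mp hk
          congr 2
          omega
        rw [hsum]
        have := stmt7_geom lam hlam n
        have hMl : 0 ≤ M / lam := by positivity
        calc M / lam * ∑ j ∈ Finset.range n, (lam ^ (j + 1))⁻¹
            ≤ M / lam * (lam - 1)⁻¹ := mul_le_mul_of_nonneg_left this hMl
        _ = M / (lam * (lam - 1)) := by
            have hl0 : lam ≠ 0 := by positivity
            have hl1 : lam - 1 ≠ 0 := sub_ne_zero.mpr (ne_of_gt hlam)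
            field_simp
  _ = _ := rfl


private lemma stmt7_separation (F : ℝ → ℝ) (hF : Differentiable ℝ F) (lam M : ℝ)
    (hlam : 1 < lam) (hM : 0 ≤ M)
    (hlo : ∀ x, lam ≤ deriv F x)
    (hlip : ∀ a b : ℝ, |deriv F a - deriv F b| ≤ M * |a - b|)
    (n : ℕ) (T t t' : ℝ) (hT : 0 < T) (htt : t < t')
    (hm : ∃ m : ℤ, F^[n] t' - F^[n] t = (m : ℝ))
    (hder : deriv (F^[n]) t ≤ T) :
    (Real.exp (M / (lam * (lam - 1))) * T)⁻¹ ≤ t' - t := by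
  have h0 : (0:ℝ) < lam := lt_trans one_pos hlam
  set D := Real.exp (M / (lam * (lam - 1))) with hD
  have hD0 : (0:ℝ) < D := Real.exp_pos _
  have hDT : (0:ℝ) < D * T := mul_pos hD0 hT
  -- the gap of F^[n]-values is at least 1
  obtain ⟨m, hmval⟩ := hm
  have hpos : 0 < F^[n] t' - F^[n] t := by
    have := stmt7_expand F hF lam hlam hlo n t t' (le_of_lt htt)
    nlinarith [pow_pos h0 n]
  have h1 : (1:ℝ) ≤ F^[n] t' - F^[n] t := by
    rw [hmval] at hpos ⊢
    have hm0 : (0:ℤ) < m := by exact_mod_cast hpos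
    exact_mod_cast hm0
  -- pick ξ with F^[n] ξ = F^[n] t + 1
  have hcont : ContinuousOn (F^[n]) (Icc t t') := (hF.iterate n).continuous.continuousOn
  have hmem : F^[n] t + 1 ∈ Icc (F^[n] t) (F^[n] t') := ⟨by linarith, by linarith⟩
  obtain ⟨ξ, hξmem, hξ⟩ := intermediate_value_Icc (le_of_lt htt) hcont hmem
  have htξ : t < ξ := by
    rcases eq_or_lt_of_le hξmem.1 with h | h
    · exfalso; rw [← h] at hξ; linarith
    · exact h
  -- MVT
  obtain ⟨η, hηmem, hη⟩ := exists_deriv_eq_slope (F^[n]) htξ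
    ((hF.iterate n).continuous.continuousOn)
    ((hF.iterate n).differentiableOn)
  rw [hξ] at hη
  have hη' : deriv (F^[n]) η = 1 / (ξ - t) := by rw [hη]; ring_nf
  -- distortion hypothesis
  have hdist : ∀ k, k < n → |F^[k] η - F^[k] t| ≤ (lam ^ (n - k))⁻¹ := by
    intro k hk
    have hkle : k ≤ n := le_of_lt hk
    have htη : t ≤ η := le_of_lt hηmem.1
    have hkm : F^[k] t ≤ F^[k] η := by
      have := stmt7_expand F hF lam hlam hlo k t η htη
      nlinarith [pow_pos h0 k]
    have hup : F^[n] η - F^[n] t ≤ 1 := by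
      have hηξ : η ≤ ξ := le_of_lt hηmem.2
      have := stmt7_expand F hF lam hlam hlo n η ξ hηξ
      nlinarith [pow_pos h0 n]
    have hiter : ∀ s : ℝ, F^[n - k] (F^[k] s) = F^[n] s := by
      intro s
      rw [← Function.iterate_add_apply]
      congr 1
      omega
    have hexp := stmt7_expand F hF lam hlam hlo (n - k) (F^[k] t) (F^[k] η) hkm
    rw [hiter, hiter] at hexp
    have hpk : (0:ℝ) < lam ^ (n - k) := pow_pos h0 _
    rw [abs_of_nonneg (by linarith)]
    rw [inv_eq_one_div, le_div_iff₀ hpk]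
    nlinarith
  have hdis := stmt7_distortion F hF lam M hlam hM hlo hlip n t η hdist
  have hDT' : deriv (F^[n]) η ≤ D * T := by
    calc deriv (F^[n]) η ≤ D * deriv (F^[n]) t := hdis
    _ ≤ D * T := mul_le_mul_of_nonneg_left hder (le_of_lt hD0)
  rw [hη'] at hDT'
  have hξt : (0:ℝ) < ξ - t := by linarith
  have h2 : (1:ℝ) ≤ D * T * (ξ - t) := by
    rw [div_le_iff₀ hξt] at hDT'
    linarith
  have h3 : (D * T)⁻¹ ≤ ξ - t := by
    rw [inv_le_iff_one_le_mul₀ hDT]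
    linarith [h2]
  have : ξ ≤ t' := hξmem.2
  linarith



private lemma stmt7_F_add_int {r ℓ : ℕ} (E : ExpMap r ℓ) (m : ℤ) (t : ℝ) :
    E.toFun (t + m) = E.toFun t + m * ℓ := by
  induction m using Int.induction_on with
  | zero => simp
  | succ k ih =>
    have h3 : (t + ((k:ℤ)+1 : ℤ) : ℝ) = (t + ((k:ℤ):ℝ)) + 1 := by push_cast; ring
    rw [h3, E.degree, ih]
    push_cast; ring
  | pred k ih =>
    have h1 : (t + (-(k:ℤ) - 1 : ℤ) : ℝ) + 1 = t + (-(k:ℤ) : ℤ) := by push_cast; ring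
    have h4 := E.degree ((t + (-(k:ℤ) - 1 : ℤ) : ℝ))
    rw [h1, ih] at h4
    have h5 : E.toFun ((t + (-(k:ℤ) - 1 : ℤ) : ℝ)) = E.toFun t + ((-(k:ℤ) : ℤ) : ℝ) * ℓ - ℓ := by
      linarith
    rw [h5]
    push_cast
    ring

private lemma stmt7_coe_rep (y : 𝕊) : ((rep y : ℝ) : 𝕊) = y :=
  (AddCircle.equivIco 1 0).symm_apply_apply y

private lemma stmt7_rep_mem (y : 𝕊) : rep y ∈ Set.Ico (0:ℝ) 1 := by
  simpa [rep] using (AddCircle.equivIco 1 0 y).2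

private lemma stmt7_sub_int {a b : ℝ} (h : (a : 𝕊) = (b : 𝕊)) : ∃ m : ℤ, a - b = m := by
  rw [QuotientAddGroup.eq_iff_sub_mem] at h
  obtain ⟨m, hm⟩ := h
  exact ⟨m, by simpa using hm.symm⟩

private lemma stmt7_coe_map {r ℓ : ℕ} (E : ExpMap r ℓ) (t : ℝ) :
    E.map ((t : ℝ) : 𝕊) = ((E.toFun t : ℝ) : 𝕊) := by
  show ((E.toFun (rep ((t:ℝ):𝕊)) : ℝ) : 𝕊) = _
  obtain ⟨m, hm⟩ := stmt7_sub_int (a := rep ((t:ℝ):𝕊)) (b := t) (by rw [stmt7_coe_rep])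
  have hrep : rep ((t:ℝ):𝕊) = t + m := by linarith
  rw [hrep, stmt7_F_add_int]
  symm
  rw [QuotientAddGroup.eq_iff_sub_mem]
  refine ⟨-(m * ℓ), ?_⟩
  simp only [zsmul_eq_mul]
  push_cast
  ring

private lemma stmt7_coe_map_iter {r ℓ : ℕ} (E : ExpMap r ℓ) (n : ℕ) (t : ℝ) :
    E.map^[n] ((t : ℝ) : 𝕊) = ((E.toFun^[n] t : ℝ) : 𝕊) := by
  induction n generalizing t with
  | zero => rfl
  | succ n ih =>
    rw [Function.iterate_succ_apply, Function.iterate_succ_apply, stmt7_coe_map, ih]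

private lemma stmt7_rep_inj : Function.Injective rep := by
  intro a b h
  have := congrArg (fun t : ℝ => ((t : ℝ) : 𝕊)) h
  simpa [stmt7_coe_rep] using this

/-- Lemma 2.1. There is a constant `C > 0` such that for every `x ∈ 𝕊¹`,
every `b > 0` and every `n ≥ 1`, the number of preimages `y ∈ E^{-n}(x)` with
`(E^n)'(y) ≤ e^{bn}` is at most `C e^{bn}`. -/


theorem stmt7 (r ℓ : ℕ) (hr : 2 ≤ r) (hl : 2 ≤ ℓ) (E : ExpMap r ℓ) :
    ∃ C : ℝ, 0 < C ∧ ∀ (x : 𝕊) (b : ℝ), 0 < b → ∀ n : ℕ, 1 ≤ n →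
      (({y : 𝕊 | E.map^[n] y = x ∧ E.derivn n y ≤ Real.exp (b * n)}.ncard : ℝ)) ≤
        C * Real.exp (b * n) := by
  classical
  set F := E.toFun with hFdef
  have hr2 : ContDiff ℝ 2 F := E.contDiff.of_le (by exact_mod_cast hr)
  have hd : Differentiable ℝ F := hr2.differentiable (by norm_num)
  have hlam1 : 1 < E.lam := E.one_lt_lam
  have h0 : (0:ℝ) < E.lam := lt_trans one_pos hlam1
  -- derivative facts
  have hC1 : ContDiff ℝ 1 (deriv F) := by
    have := (contDiff_succ_iff_deriv (n := 1)).mp (by exact_mod_cast hr2)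
    exact this.2.2
  have hdF' : Differentiable ℝ (deriv F) := hC1.differentiable one_ne_zero
  have hcF'' : Continuous (deriv (deriv F)) := (contDiff_one_iff_deriv.mp hC1).2
  -- periodicity of second derivative
  have hper : ∀ x : ℝ, deriv F (x + 1) = deriv F x := by
    intro x
    have h1 : deriv (fun y => F (y + 1)) x = deriv F (x + 1) := deriv_comp_add_const F 1 x
    have h2 : (fun y => F (y + 1)) = fun y => F y + ℓ := by
      funext y; exact E.degree y
    rw [h2] at h1
    rw [← h1]
    simp
  have hper2 : Function.Periodic (deriv (deriv F)) 1 := by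
    intro x
    have h1 : deriv (fun y => deriv F (y + 1)) x = deriv (deriv F) (x + 1) :=
      deriv_comp_add_const (deriv F) 1 x
    have h2 : (fun y => deriv F (y + 1)) = deriv F := funext hper
    rw [h2] at h1
    exact h1.symm
  -- bound on the second derivative
  obtain ⟨M, hMb⟩ := (isCompact_Icc (a := (0:ℝ)) (b := 1)).exists_bound_of_continuousOn
    hcF''.continuousOn
  have hMglob : ∀ x : ℝ, |deriv (deriv F) x| ≤ M := by
    intro x
    have hfr : x - (⌊x⌋ : ℤ) ∈ Set.Icc (0:ℝ) 1 := by
      constructor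
      · linarith [Int.floor_le x]
      · linarith [Int.lt_floor_add_one x]
    have := hMb _ hfr
    rwa [show deriv (deriv F) (x - (⌊x⌋:ℤ)) = deriv (deriv F) x by
      have := hper2.sub_int_mul_eq (x := x) ⌊x⌋
      simpa using this] at this
  have hM0 : 0 ≤ M := le_trans (abs_nonneg _) (hMglob 0)
  -- Lipschitz bound for deriv F
  have hlip : ∀ a b : ℝ, |deriv F a - deriv F b| ≤ M * |a - b| := by
    intro a b
    have := Convex.norm_image_sub_le_of_norm_deriv_le (s := Set.univ) (f := deriv F)
      (x := b) (y := a) (fun x _ => hdF' x)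
      (fun x _ => by simpa [Real.norm_eq_abs] using hMglob x)
      convex_univ trivial trivial
    simpa [Real.norm_eq_abs] using this
  set D := Real.exp (M / (E.lam * (E.lam - 1))) with hDdef
  have hD0 : (0:ℝ) < D := Real.exp_pos _
  have hD1 : (1:ℝ) ≤ D := Real.one_le_exp (div_nonneg hM0 (by nlinarith))
  refine ⟨2 * D, by positivity, ?_⟩
  intro x b hb n hn
  set T := Real.exp (b * n) with hTdef
  have hT0 : (0:ℝ) < T := Real.exp_pos _
  have hT1 : (1:ℝ) ≤ T := Real.one_le_exp (by positivity)
  have hDT : (0:ℝ) < D * T := mul_pos hD0 hT0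
  have hDT1 : (1:ℝ) ≤ D * T := by nlinarith
  set S := {y : 𝕊 | E.map^[n] y = x ∧ E.derivn n y ≤ T} with hSdef
  -- the key separation property
  have hsep : ∀ y ∈ S, ∀ y' ∈ S, rep y < rep y' → (D * T)⁻¹ ≤ rep y' - rep y := by
    intro y hy y' hy' hlt
    have h1 : ((F^[n] (rep y) : ℝ) : 𝕊) = x := by
      rw [← stmt7_coe_map_iter, stmt7_coe_rep]; exact hy.1
    have h2 : ((F^[n] (rep y') : ℝ) : 𝕊) = x := by
      rw [← stmt7_coe_map_iter, stmt7_coe_rep]; exact hy'.1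
    have hm : ∃ m : ℤ, F^[n] (rep y') - F^[n] (rep y) = (m : ℝ) :=
      stmt7_sub_int (h2.trans h1.symm)
    exact stmt7_separation F hd E.lam M hlam1 hM0 E.lam_le_deriv hlip n T
      (rep y) (rep y') hT0 hlt hm hy.2
  -- injectivity of the "bin" map
  have hinj : Set.InjOn (fun y : 𝕊 => ⌊rep y * (D * T)⌋) S := by
    intro y hy y' hy' hf
    by_contra hne
    have hrne : rep y ≠ rep y' := fun h => hne (stmt7_rep_inj h)
    have habs : ∀ u ∈ S, ∀ v ∈ S, rep u < rep v →
        ⌊rep u * (D * T)⌋ = ⌊rep v * (D * T)⌋ → False := by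
      intro u hu v hv hlt hfe
      have hs := hsep u hu v hv hlt
      have h1 : rep v * (D * T) < ⌊rep v * (D * T)⌋ + 1 := Int.lt_floor_add_one _
      have h2 : (⌊rep u * (D * T)⌋ : ℝ) ≤ rep u * (D * T) := Int.floor_le _
      rw [← hfe] at h1
      have h3 : (rep v - rep u) * (D * T) < 1 := by linarith
      have h4 : rep v - rep u < (D * T)⁻¹ := by
        rw [inv_eq_one_div, lt_div_iff₀ hDT]
        linarith
      linarith
    rcases lt_or_gt_of_ne hrne with h | h
    · exact habs y hy y' hy' h hf
    · exact habs y' hy' y hy h hf.symm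
  -- count via bins
  set K : ℤ := ⌈D * T⌉ with hKdef
  have hmaps : ∀ y ∈ S, (fun y : 𝕊 => ⌊rep y * (D * T)⌋) y ∈ ↑(Finset.Ico (0:ℤ) K) := by
    intro y hy
    simp only [Finset.mem_coe, Finset.mem_Ico]
    constructor
    · apply Int.floor_nonneg.mpr
      exact mul_nonneg (stmt7_rep_mem y).1 (le_of_lt hDT)
    · apply Int.floor_lt.mpr
      calc rep y * (D * T) < 1 * (D * T) :=
            mul_lt_mul_of_pos_right (stmt7_rep_mem y).2 hDT
      _ = D * T := one_mul _
      _ ≤ (K : ℝ) := Int.le_ceil _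
  have hcount : S.ncard ≤ (↑(Finset.Ico (0:ℤ) K) : Set ℤ).ncard :=
    Set.ncard_le_ncard_of_injOn _ hmaps hinj (Finset.finite_toSet _)
  have hKcard : (↑(Finset.Ico (0:ℤ) K) : Set ℤ).ncard = K.toNat := by
    rw [Set.ncard_coe_finset, Int.card_Ico]
    simp
  have hK1 : (1:ℤ) ≤ K := by
    have h := Int.lt_ceil.mpr (show ((0:ℤ):ℝ) < D * T by exact_mod_cast hDT)
    omega
  have hKval : (K.toNat : ℝ) = (K : ℝ) := by
    exact_mod_cast Int.toNat_of_nonneg (by linarith : (0:ℤ) ≤ K)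
  calc (S.ncard : ℝ) ≤ ((↑(Finset.Ico (0:ℤ) K) : Set ℤ).ncard : ℝ) := by exact_mod_cast hcount
  _ = (K : ℝ) := by rw [hKcard, hKval]
  _ ≤ D * T + 1 := by
      have := Int.ceil_lt_add_one (D * T)
      push_cast
      linarith
  _ ≤ 2 * D * T := by nlinarith
  _ = 2 * D * Real.exp (b * n) := rfl
end
end

section
/- Fix ρ > 0, a finite cover of [log λ, log Λ] by open intervals I_j = (a_j, b_j), 1 ≤ j ≤ J, each of length < ρ/3, set N = ⌈6ρ^{−1} log⌈2Λ⌉⌉, and choose an integer q so large that (q+1)N·e^{−qρ/2} < 1/(4J). If 𝔫(τ) ≥ e^ρ, then for arbitrarily large n there exist: a point z₀ = (x,s) ∈ T², a unit vector v₀ ∈ ℝ², an index 1 ≤ j ≤ J, a subset B ⊂ A^q with #B = 2(q+1)N, and for each β ∈ B a subset Σ(β) ⊂ A^n with #Σ(β) ≥ e^{ρn}·ℓ^{−q}/(2J), such that: for every β ∈ B and every α ∈ Σ(β) one has [α]_q = β, v₀ ∈ Df^n(x_α)K_R, and (E^n)′(x_α) ∈ [e^{a_j n}, e^{b_j n}].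 -/
noncomputable section

open Filter Set Topology MeasureTheory

variable {r ℓ : ℕ}

namespace Stmt8Aux

open Real Filter

variable {r ℓ : ℕ}

lemma rep_mem (x : 𝕊) : rep x ∈ Set.Ico (0:ℝ) 1 := by
  have h := (AddCircle.equivIco 1 0 x).2
  simpa [rep] using h

lemma dsup_bddAbove {s : ℕ∞} (τ : CrFun s) (hs1 : 1 ≤ s) :
    BddAbove ((fun x => |deriv τ.toFun x|) '' Set.Icc (0:ℝ) 1) := by
  apply IsCompact.bddAbove_image isCompact_Icc
  exact ((τ.contDiff.continuous_deriv (by exact_mod_cast hs1)).abs).continuousOn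

lemma abs_deriv_le_dsup {s : ℕ∞} (τ : CrFun s) (hs1 : 1 ≤ s) {y : ℝ}
    (hy : y ∈ Set.Icc (0:ℝ) 1) : |deriv τ.toFun y| ≤ τ.dsup :=
  le_csSup (dsup_bddAbove τ hs1) ⟨y, hy, rfl⟩

lemma abs_deriv_rep_le_dsup {s : ℕ∞} (τ : CrFun s) (hs1 : 1 ≤ s) (x : 𝕊) :
    |deriv τ.toFun (rep x)| ≤ τ.dsup :=
  abs_deriv_le_dsup τ hs1 (Set.mem_Icc_of_Ico (rep_mem x))

lemma dsup_nonneg {s : ℕ∞} (τ : CrFun s) (hs1 : 1 ≤ s) : 0 ≤ τ.dsup :=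
  le_trans (abs_nonneg _) (abs_deriv_le_dsup τ hs1 (by norm_num : (0:ℝ) ∈ Set.Icc (0:ℝ) 1))

lemma deriv_iter_bounds (E : ExpMap r ℓ) (hr1 : 1 ≤ r) (n : ℕ) (y : ℝ) :
    E.lam ^ n ≤ deriv (E.toFun^[n]) y ∧ deriv (E.toFun^[n]) y ≤ E.Lam ^ n := by
  have hd : Differentiable ℝ E.toFun :=
    E.contDiff.differentiable (by exact_mod_cast Nat.one_le_iff_ne_zero.mp hr1)
  induction n generalizing y with
  | zero => simp
  | succ n ih =>
    have hdi : Differentiable ℝ (E.toFun^[n]) := hd.iterate n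
    have hder : deriv (E.toFun^[n+1]) y
        = deriv E.toFun (E.toFun^[n] y) * deriv (E.toFun^[n]) y := by
      rw [Function.iterate_succ']
      exact deriv_comp y (hd _) (hdi y)
    have h1 := (ih y).1
    have h2 := (ih y).2
    have hlpos : (0:ℝ) < E.lam := lt_trans one_pos E.one_lt_lam
    have hln : (0:ℝ) < E.lam ^ n := pow_pos hlpos n
    have hLn : (0:ℝ) < E.Lam ^ n := pow_pos (lt_of_lt_of_le hlpos E.lam_le_Lam) n
    have he1 := E.lam_le_deriv (E.toFun^[n] y)
    have he2 := E.deriv_le_Lam (E.toFun^[n] y)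
    constructor
    · rw [hder, pow_succ]; nlinarith
    · rw [hder, pow_succ]; nlinarith


lemma derivn_bounds (E : ExpMap r ℓ) (hr1 : 1 ≤ r) (n : ℕ) (x : 𝕊) :
    E.lam ^ n ≤ E.derivn n x ∧ E.derivn n x ≤ E.Lam ^ n :=
  deriv_iter_bounds E hr1 n (rep x)

lemma Jacn_fst (E : ExpMap r ℓ) {s : ℕ∞} (τ : CrFun s) (n : ℕ) :
    ∀ z w : 𝕊 × 𝕊, z.1 = w.1 → Jacn E τ n z = Jacn E τ n w := by
  induction n with
  | zero => intro z w h; rfl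
  | succ n ih =>
    intro z w h
    show Jacn E τ n (skew E τ z) * Jac1 E τ z.1 = Jacn E τ n (skew E τ w) * Jac1 E τ w.1
    rw [h, ih (skew E τ z) (skew E τ w) (by simp [skew, h])]

lemma JacnB_eq (E : ExpMap r ℓ) {s : ℕ∞} (τ : CrFun s) (n : ℕ) (z : 𝕊 × 𝕊) :
    Jacn E τ n z = JacnB E τ n z.1 :=
  Jacn_fst E τ n z (z.1, (0:𝕊)) rfl

lemma Jacn_struct (E : ExpMap r ℓ) {s : ℕ∞} (τ : CrFun s) (hs1 : 1 ≤ s) (n : ℕ) (z : 𝕊 × 𝕊) :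
    (Jacn E τ n z) 0 1 = 0 ∧ (Jacn E τ n z) 1 1 = 1 ∧
    E.lam ^ n ≤ (Jacn E τ n z) 0 0 ∧ (Jacn E τ n z) 0 0 ≤ E.Lam ^ n ∧
    |(Jacn E τ n z) 1 0| ≤ τ.dsup * ((Jacn E τ n z) 0 0 - 1) / (E.lam - 1) := by
  have hlam := E.one_lt_lam
  have hdsup := dsup_nonneg τ hs1
  induction n generalizing z with
  | zero =>
    refine ⟨?_, ?_, ?_, ?_, ?_⟩ <;>
      simp [Jacn, Matrix.one_apply]
  | succ n ih =>
    obtain ⟨h01, h11, hP1, hP2, hc⟩ := ih (skew E τ z)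
    set A := Jacn E τ n (skew E τ z) with hA
    have hmul : Jacn E τ (n+1) z = A * Jac1 E τ z.1 := rfl
    have he1 := E.lam_le_deriv (rep z.1)
    have he2 := E.deriv_le_Lam (rep z.1)
    have ht := abs_deriv_rep_le_dsup τ hs1 z.1
    set e := deriv E.toFun (rep z.1)
    set t := deriv τ.toFun (rep z.1)
    have h00 : (Jacn E τ (n+1) z) 0 0 = A 0 0 * e := by
      rw [hmul]; simp [Matrix.mul_apply, Fin.sum_univ_two, Jac1, h01]; exact Or.inl rfl
    have h10 : (Jacn E τ (n+1) z) 1 0 = A 1 0 * e + t := by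
      rw [hmul]; simp [Matrix.mul_apply, Fin.sum_univ_two, Jac1, h11]; rfl
    have g01 : (Jacn E τ (n+1) z) 0 1 = 0 := by
      rw [hmul]; simp [Matrix.mul_apply, Fin.sum_univ_two, Jac1, h01]
    have g11 : (Jacn E τ (n+1) z) 1 1 = 1 := by
      rw [hmul]; simp [Matrix.mul_apply, Fin.sum_univ_two, Jac1, h11]
    have hln : (0:ℝ) < E.lam ^ n := pow_pos (lt_trans one_pos hlam) n
    have hA00 : (1:ℝ) ≤ A 0 0 := le_trans (one_le_pow₀ (le_of_lt hlam)) hP1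
    refine ⟨g01, g11, ?_, ?_, ?_⟩
    · rw [h00, pow_succ]; nlinarith
    · rw [h00, pow_succ]; nlinarith
    · rw [h10, h00]
      have habs : |A 1 0 * e + t| ≤ |A 1 0| * e + τ.dsup := by
        calc |A 1 0 * e + t| ≤ |A 1 0 * e| + |t| := abs_add_le _ _
        _ ≤ |A 1 0| * e + τ.dsup := by
            rw [abs_mul, abs_of_pos (by linarith : (0:ℝ) < e)]
            linarith
      refine le_trans habs ?_
      rw [le_div_iff₀ (by linarith : (0:ℝ) < E.lam - 1)]
      have hc' : |A 1 0| * (E.lam - 1) ≤ τ.dsup * (A 0 0 - 1) :=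
        (le_div_iff₀ (by linarith : (0:ℝ) < E.lam - 1)).mp hc
      nlinarith [mul_le_mul_of_nonneg_right hc' (by linarith : (0:ℝ) ≤ e),
        mul_nonneg hdsup (by linarith : (0:ℝ) ≤ e - E.lam), abs_nonneg (A 1 0)]


lemma cone_smul (E : ExpMap r ℓ) {R : ℝ} {w : Fin 2 → ℝ} (c : ℝ) (hw : w ∈ E.cone R) :
    c • w ∈ E.cone R := by
  have hw' : |w 1| ≤ R / (E.lam - 1) * |w 0| := hw
  show |(c • w) 1| ≤ R / (E.lam - 1) * |(c • w) 0|
  simp only [Pi.smul_apply, smul_eq_mul, abs_mul]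
  calc |c| * |w 1| ≤ |c| * (R / (E.lam - 1) * |w 0|) :=
        mul_le_mul_of_nonneg_left hw' (abs_nonneg c)
  _ = R / (E.lam - 1) * (|c| * |w 0|) := by ring

lemma smul_mem_image_cone (E : ExpMap r ℓ) {R : ℝ} {M : Matrix (Fin 2) (Fin 2) ℝ}
    {v : Fin 2 → ℝ} (c : ℝ) (hv : v ∈ M.mulVec '' E.cone R) :
    c • v ∈ M.mulVec '' E.cone R := by
  obtain ⟨w, hw, rfl⟩ := hv
  exact ⟨c • w, cone_smul E c hw, Matrix.mulVec_smul M c w⟩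

lemma mulVec_fin2 (M : Matrix (Fin 2) (Fin 2) ℝ) (w : Fin 2 → ℝ) (i : Fin 2) :
    M.mulVec w i = M i 0 * w 0 + M i 1 * w 1 := by
  simp [Matrix.mulVec, dotProduct, Fin.sum_univ_two]

lemma Jacn_cone_map (E : ExpMap r ℓ) {s : ℕ∞} (τ : CrFun s) (hs1 : 1 ≤ s) {R R' : ℝ}
    (n : ℕ) (z : 𝕊 × 𝕊)
    (hkey : τ.dsup * ((Jacn E τ n z) 0 0 - 1) + R' ≤ R * (Jacn E τ n z) 0 0)
    {w : Fin 2 → ℝ} (hw : w ∈ E.cone R') :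
    (Jacn E τ n z).mulVec w ∈ E.cone R := by
  obtain ⟨h01, h11, hP1, hP2, hc⟩ := Jacn_struct E τ hs1 n z
  set A := Jacn E τ n z
  have hlam := E.one_lt_lam
  have hd : (0:ℝ) < E.lam - 1 := by linarith
  have h0 : A.mulVec w 0 = A 0 0 * w 0 := by rw [mulVec_fin2, h01]; ring
  have h1 : A.mulVec w 1 = A 1 0 * w 0 + w 1 := by rw [mulVec_fin2, h11]; ring
  have hP0 : (1:ℝ) ≤ A 0 0 := le_trans (one_le_pow₀ hlam.le) hP1
  have hw' : |w 1| ≤ R' / (E.lam - 1) * |w 0| := hw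
  have hc' : |A 1 0| * (E.lam - 1) ≤ τ.dsup * (A 0 0 - 1) := (le_div_iff₀ hd).mp hc
  show |A.mulVec w 1| ≤ R / (E.lam - 1) * |A.mulVec w 0|
  rw [h0, h1, abs_mul, abs_of_pos (by linarith : (0:ℝ) < A 0 0)]
  have habs : |A 1 0 * w 0 + w 1| ≤ |A 1 0| * |w 0| + |w 1| := by
    calc |A 1 0 * w 0 + w 1| ≤ |A 1 0 * w 0| + |w 1| := abs_add_le _ _
    _ = |A 1 0| * |w 0| + |w 1| := by rw [abs_mul]
  refine le_trans habs ?_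
  have hw2 : |w 1| * (E.lam - 1) ≤ R' * |w 0| := by
    have h := mul_le_mul_of_nonneg_right hw' hd.le
    calc |w 1| * (E.lam - 1) ≤ (R' / (E.lam - 1) * |w 0|) * (E.lam - 1) := h
    _ = R' * |w 0| := by field_simp
  have step : |A 1 0| * (E.lam - 1) + R' ≤ R * A 0 0 := by linarith
  rw [div_mul_eq_mul_div, le_div_iff₀ hd]
  nlinarith [mul_le_mul_of_nonneg_right step (abs_nonneg (w 0)), hw2,
    abs_nonneg (w 0), abs_nonneg (w 1)]

lemma Jacn_cone_invariant (E : ExpMap r ℓ) {s : ℕ∞} (τ : CrFun s) (hs1 : 1 ≤ s) {R : ℝ}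
    (hRd : τ.dsup ≤ R) (n : ℕ) (z : 𝕊 × 𝕊) {w : Fin 2 → ℝ} (hw : w ∈ E.cone R) :
    (Jacn E τ n z).mulVec w ∈ E.cone R := by
  obtain ⟨_, _, hP1, _, _⟩ := Jacn_struct E τ hs1 n z
  have hP0 : (1:ℝ) ≤ (Jacn E τ n z) 0 0 := le_trans (one_le_pow₀ E.one_lt_lam.le) hP1
  exact Jacn_cone_map E τ hs1 n z (by nlinarith) hw

lemma Jacn_cone_shrink (E : ExpMap r ℓ) {s : ℕ∞} (τ : CrFun s) (hs1 : 1 ≤ s) {R R' : ℝ}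
    (hRd : τ.dsup < R) (hR' : 0 ≤ R') (n : ℕ)
    (hn : R' / (R - τ.dsup) ≤ E.lam ^ n) (z : 𝕊 × 𝕊)
    {w : Fin 2 → ℝ} (hw : w ∈ E.cone R') :
    (Jacn E τ n z).mulVec w ∈ E.cone R := by
  obtain ⟨_, _, hP1, _, _⟩ := Jacn_struct E τ hs1 n z
  have hP0 : (1:ℝ) ≤ (Jacn E τ n z) 0 0 := le_trans (one_le_pow₀ E.one_lt_lam.le) hP1
  have hsub : (0:ℝ) < R - τ.dsup := by linarith
  have h1 : R' ≤ (R - τ.dsup) * E.lam ^ n := (div_le_iff₀' hsub).mp hn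
  have hds := dsup_nonneg τ hs1
  apply Jacn_cone_map E τ hs1 n z _ hw
  nlinarith [mul_le_mul_of_nonneg_left hP1 hsub.le]

lemma Jacn_add (E : ExpMap r ℓ) {s : ℕ∞} (τ : CrFun s) (m : ℕ) :
    ∀ (n : ℕ) (z : 𝕊 × 𝕊),
      Jacn E τ (m + n) z = Jacn E τ m ((skew E τ)^[n] z) * Jacn E τ n z := by
  intro n
  induction n with
  | zero => intro z; simp [Jacn]
  | succ n ih =>
    intro z
    calc Jacn E τ (m + (n+1)) z = Jacn E τ (m + n) (skew E τ z) * Jac1 E τ z.1 := rfl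
    _ = (Jacn E τ m ((skew E τ)^[n] (skew E τ z)) * Jacn E τ n (skew E τ z)) * Jac1 E τ z.1 := by
        rw [ih]
    _ = Jacn E τ m ((skew E τ)^[n+1] z) * (Jacn E τ n (skew E τ z) * Jac1 E τ z.1) := by
        rw [Matrix.mul_assoc, Function.iterate_succ_apply]
    _ = Jacn E τ m ((skew E τ)^[n+1] z) * Jacn E τ (n+1) z := rfl

lemma Jacn_det_isUnit (E : ExpMap r ℓ) {s : ℕ∞} (τ : CrFun s) (hs1 : 1 ≤ s) (n : ℕ)
    (z : 𝕊 × 𝕊) : IsUnit (Jacn E τ n z).det := by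
  obtain ⟨h01, h11, hP1, _, _⟩ := Jacn_struct E τ hs1 n z
  have hpos : (0:ℝ) < (Jacn E τ n z) 0 0 :=
    lt_of_lt_of_le (pow_pos (by linarith [E.one_lt_lam]) n) hP1
  have : (Jacn E τ n z).det = (Jacn E τ n z) 0 0 := by
    rw [Matrix.det_fin_two, h01, h11]; ring
  rw [this]
  exact (ne_of_gt hpos).isUnit

lemma mulVec_cancel {M : Matrix (Fin 2) (Fin 2) ℝ} (hdet : IsUnit M.det) {u v : Fin 2 → ℝ}
    (h : M.mulVec u = v) : u = M⁻¹.mulVec v := by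
  rw [← h, Matrix.mulVec_mulVec, Matrix.nonsing_inv_mul M hdet, Matrix.one_mulVec]

lemma unitVec_ne_zero {v : Fin 2 → ℝ} (hv : IsUnitVec v) : v ≠ 0 := by
  intro h
  rw [h] at hv
  simp [IsUnitVec] at hv

lemma exists_unit_smul {u : Fin 2 → ℝ} (hu : u ≠ 0) : ∃ c : ℝ, c ≠ 0 ∧ IsUnitVec (c • u) := by
  have h2 : 0 < u 0 ^ 2 + u 1 ^ 2 := by
    by_contra h
    push_neg at h
    have h0 : u 0 = 0 := by nlinarith [sq_nonneg (u 0), sq_nonneg (u 1)]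
    have h1 : u 1 = 0 := by nlinarith [sq_nonneg (u 0), sq_nonneg (u 1)]
    exact hu (funext fun i => by fin_cases i <;> assumption)
  have hs : 0 < Real.sqrt (u 0 ^ 2 + u 1 ^ 2) := Real.sqrt_pos.mpr h2
  refine ⟨(Real.sqrt (u 0 ^ 2 + u 1 ^ 2))⁻¹, inv_ne_zero (ne_of_gt hs), ?_⟩
  show ((Real.sqrt (u 0 ^ 2 + u 1 ^ 2))⁻¹ • u) 0 ^ 2 + ((Real.sqrt (u 0 ^ 2 + u 1 ^ 2))⁻¹ • u) 1 ^ 2 = 1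
  have hc2 : ((Real.sqrt (u 0 ^ 2 + u 1 ^ 2))⁻¹) ^ 2 = (u 0 ^ 2 + u 1 ^ 2)⁻¹ := by
    rw [inv_pow, Real.sq_sqrt h2.le]
  simp only [Pi.smul_apply, smul_eq_mul]
  calc ((Real.sqrt (u 0 ^ 2 + u 1 ^ 2))⁻¹ * u 0) ^ 2 + ((Real.sqrt (u 0 ^ 2 + u 1 ^ 2))⁻¹ * u 1) ^ 2
      = ((Real.sqrt (u 0 ^ 2 + u 1 ^ 2))⁻¹) ^ 2 * (u 0 ^ 2 + u 1 ^ 2) := by ring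
  _ = 1 := by rw [hc2]; field_simp


lemma codePt_inj {ℓ : ℕ} {g : Fin ℓ → 𝕊 → 𝕊}
    (hg_part : ∀ z : 𝕊, ∃! p : Fin ℓ × 𝕊, g p.1 p.2 = z) :
    ∀ {n : ℕ} {α α' : Fin n → Fin ℓ} {x x' : 𝕊},
      codePt g α x = codePt g α' x' → α = α' ∧ x = x' := by
  intro n
  induction n with
  | zero => intro α α' x x' h; exact ⟨funext fun i => i.elim0, h⟩
  | succ n ih =>
    intro α α' x x' h
    obtain ⟨p, -, huniq⟩ := hg_part (codePt g α x)
    have e1 : (⟨α (Fin.last n), codePt g (fun i : Fin n => α i.castSucc) x⟩ : Fin ℓ × 𝕊) = p :=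
      huniq _ rfl
    have e2 : (⟨α' (Fin.last n), codePt g (fun i : Fin n => α' i.castSucc) x'⟩ : Fin ℓ × 𝕊) = p :=
      huniq _ ((rfl :
        g (α' (Fin.last n)) (codePt g (fun i : Fin n => α' i.castSucc) x') =
          codePt g α' x').trans h.symm)
    have e12 := e1.trans e2.symm
    rw [Prod.mk.injEq] at e12
    obtain ⟨hl, hc⟩ := e12
    obtain ⟨hi, hx⟩ := ih hc
    refine ⟨funext fun i => ?_, hx⟩
    exact Fin.lastCases hl (fun j => congrFun hi j) i

lemma Emap_codePt_succ {r ℓ : ℕ} (E : ExpMap r ℓ) {g : Fin ℓ → 𝕊 → 𝕊}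
    (hg_sec : ∀ (j : Fin ℓ) (y : 𝕊), E.map (g j y) = y)
    {n : ℕ} (α : Fin (n+1) → Fin ℓ) (x : 𝕊) :
    E.map (codePt g α x) = codePt g (fun i : Fin n => α i.castSucc) x := hg_sec _ _

lemma Emap_iter_codePt {r ℓ : ℕ} (E : ExpMap r ℓ) {g : Fin ℓ → 𝕊 → 𝕊}
    (hg_sec : ∀ (j : Fin ℓ) (y : 𝕊), E.map (g j y) = y) :
    ∀ (n p : ℕ) (hpn : p ≤ n) (α : Fin n → Fin ℓ) (x : 𝕊),
      (E.map)^[n - p] (codePt g α x) = codePt g (trunc α p hpn) x := by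
  intro n
  induction n with
  | zero =>
    intro p h α x
    have hp0 : p = 0 := by omega
    subst hp0
    rfl
  | succ n ih =>
    intro p hpn α x
    by_cases hp : p = n + 1
    · subst hp
      have h0 : n + 1 - (n+1) = 0 := by omega
      rw [h0]
      have htr : trunc α (n+1) hpn = α := funext fun i => congrArg α (Fin.ext rfl)
      rw [htr]
      rfl
    · have hpn' : p ≤ n := by omega
      have hstep : n + 1 - p = (n - p) + 1 := by omega
      rw [hstep, Function.iterate_succ_apply, Emap_codePt_succ E hg_sec α x, ih p hpn' _ x]
      congr 1

lemma branches {r ℓ : ℕ} (E : ExpMap r ℓ) {s : ℕ∞} (τ : CrFun s) {g : Fin ℓ → 𝕊 → 𝕊}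
    (hg_sec : ∀ (j : Fin ℓ) (y : 𝕊), E.map (g j y) = y)
    (hg_part : ∀ z : 𝕊, ∃! p : Fin ℓ × 𝕊, g p.1 p.2 = z) :
    ∀ (n : ℕ) (z : 𝕊 × 𝕊), ∃ e : (Fin n → Fin ℓ) → 𝕊 × 𝕊,
      (∀ α, (skew E τ)^[n] (e α) = z ∧ (e α).1 = codePt g α z.1) ∧
      (∀ ζ, (skew E τ)^[n] ζ = z → ∃ α, ζ = e α) := by
  intro n
  induction n with
  | zero =>
    intro z
    exact ⟨fun _ => z, fun α => ⟨rfl, rfl⟩, fun ζ h => ⟨fun i => i.elim0, h⟩⟩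
  | succ n ih =>
    intro z
    obtain ⟨e, he1, he2⟩ := ih z
    set b : Fin ℓ → 𝕊 × 𝕊 → 𝕊 × 𝕊 :=
      fun j w => (g j w.1, w.2 - ((τ.toFun (rep (g j w.1)) : ℝ) : 𝕊)) with hbdef
    have hb : ∀ j w, skew E τ (b j w) = w := by
      intro j w
      show (E.map (g j w.1),
        (w.2 - ((τ.toFun (rep (g j w.1)) : ℝ) : 𝕊)) + ((τ.toFun (rep (g j w.1)) : ℝ) : 𝕊)) = w
      rw [hg_sec, sub_add_cancel]
    refine ⟨fun α => b (α (Fin.last n)) (e (fun i => α i.castSucc)), fun α => ⟨?_, ?_⟩, ?_⟩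
    · rw [Function.iterate_succ_apply, hb]
      exact (he1 _).1
    · show g (α (Fin.last n)) ((e (fun i => α i.castSucc)).1) = _
      rw [(he1 _).2]
      rfl
    · intro ζ hζ
      rw [Function.iterate_succ_apply] at hζ
      obtain ⟨α', hα'⟩ := he2 _ hζ
      obtain ⟨p, hp, -⟩ := hg_part ζ.1
      have hbase : (e α').1 = codePt g α' z.1 := (he1 α').2
      have hE : E.map ζ.1 = (e α').1 := by rw [← hα']; rfl
      have hp2 : p.2 = (e α').1 := by
        rw [← hE, ← hp, hg_sec]
      have hfst : g p.1 ((e α').1) = ζ.1 := by rw [← hp2, hp]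
      have hsnd : ζ.2 = (e α').2 - ((τ.toFun (rep ζ.1) : ℝ) : 𝕊) := by
        have : ζ.2 + ((τ.toFun (rep ζ.1) : ℝ) : 𝕊) = (e α').2 := by rw [← hα']; rfl
        rw [← this, add_sub_cancel_right]
      refine ⟨Fin.snoc α' p.1, ?_⟩
      have hinit : (fun i : Fin n => (Fin.snoc α' p.1 : Fin (n+1) → Fin ℓ) i.castSucc) = α' :=
        funext fun i => Fin.snoc_castSucc _ _ _
      show ζ = b ((Fin.snoc α' p.1 : Fin (n+1) → Fin ℓ) (Fin.last n))
        (e (fun i => (Fin.snoc α' p.1 : Fin (n+1) → Fin ℓ) i.castSucc))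
      rw [hinit, Fin.snoc_last]
      have : b p.1 (e α') = (g p.1 ((e α').1), (e α').2 - ((τ.toFun (rep (g p.1 ((e α').1))) : ℝ) : 𝕊)) := rfl
      rw [this, hfst]
      exact Prod.ext (by rfl) (by rw [hsnd])


open scoped Classical

def coneSet {r ℓ : ℕ} (E : ExpMap r ℓ) {s : ℕ∞} (τ : CrFun s) (R : ℝ) (n : ℕ)
    (z : 𝕊 × 𝕊) (v : Fin 2 → ℝ) : Set (𝕊 × 𝕊) :=
  {ζ : 𝕊 × 𝕊 | (skew E τ)^[n] ζ = z ∧ v ∈ (Jacn E τ n ζ).mulVec '' E.cone R}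

lemma nQ_eq_sSup {r ℓ : ℕ} (E : ExpMap r ℓ) {s : ℕ∞} (τ : CrFun s) (R : ℝ) (n : ℕ) :
    nQ E τ R n = sSup {c : ℝ | ∃ z v, IsUnitVec v ∧ c = ((coneSet E τ R n z v).ncard : ℝ)} := rfl

section Counting

variable {r ℓ : ℕ} {E : ExpMap r ℓ} {s : ℕ∞} {τ : CrFun s} {g : Fin ℓ → 𝕊 → 𝕊}

lemma e_inj (hg_part : ∀ z : 𝕊, ∃! p : Fin ℓ × 𝕊, g p.1 p.2 = z)
    {n : ℕ} {z : 𝕊 × 𝕊} {e : (Fin n → Fin ℓ) → 𝕊 × 𝕊}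
    (he1 : ∀ α, (skew E τ)^[n] (e α) = z ∧ (e α).1 = codePt g α z.1) :
    Function.Injective e := by
  intro α α' h
  have hb : codePt g α z.1 = codePt g α' z.1 := by
    rw [← (he1 α).2, ← (he1 α').2, h]
  exact (codePt_inj hg_part hb).1

lemma fiber_eq_of_fst (hg_part : ∀ z : 𝕊, ∃! p : Fin ℓ × 𝕊, g p.1 p.2 = z)
    {n : ℕ} {z : 𝕊 × 𝕊} {e : (Fin n → Fin ℓ) → 𝕊 × 𝕊}
    (he1 : ∀ α, (skew E τ)^[n] (e α) = z ∧ (e α).1 = codePt g α z.1)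
    (he2 : ∀ ζ, (skew E τ)^[n] ζ = z → ∃ α, ζ = e α)
    {ζ₁ ζ₂ : 𝕊 × 𝕊} (h1 : (skew E τ)^[n] ζ₁ = z) (h2 : (skew E τ)^[n] ζ₂ = z)
    (h : ζ₁.1 = ζ₂.1) : ζ₁ = ζ₂ := by
  obtain ⟨α₁, rfl⟩ := he2 _ h1
  obtain ⟨α₂, rfl⟩ := he2 _ h2
  rw [(he1 α₁).2, (he1 α₂).2] at h
  obtain ⟨rfl, -⟩ := codePt_inj hg_part h
  rfl

lemma skew_iter_fst (E : ExpMap r ℓ) (τ : CrFun s) (k : ℕ) :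
    ∀ ζ : 𝕊 × 𝕊, ((skew E τ)^[k] ζ).1 = (E.map)^[k] ζ.1 := by
  induction k with
  | zero => intro ζ; rfl
  | succ k ih =>
    intro ζ
    rw [Function.iterate_succ_apply, Function.iterate_succ_apply, ih]
    rfl

lemma coneSet_eq_image
    (hg_part : ∀ z : 𝕊, ∃! p : Fin ℓ × 𝕊, g p.1 p.2 = z)
    {R : ℝ} {n : ℕ} {z : 𝕊 × 𝕊} {v : Fin 2 → ℝ} {e : (Fin n → Fin ℓ) → 𝕊 × 𝕊}
    (he1 : ∀ α, (skew E τ)^[n] (e α) = z ∧ (e α).1 = codePt g α z.1)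
    (he2 : ∀ ζ, (skew E τ)^[n] ζ = z → ∃ α, ζ = e α) :
    coneSet E τ R n z v
      = e '' {α | v ∈ (Jacn E τ n (e α)).mulVec '' E.cone R} := by
  ext ζ
  constructor
  · rintro ⟨hf, hv⟩
    obtain ⟨α, rfl⟩ := he2 _ hf
    exact ⟨α, hv, rfl⟩
  · rintro ⟨α, hα, rfl⟩
    exact ⟨(he1 α).1, hα⟩

lemma coneSet_ncard
    (hg_part : ∀ z : 𝕊, ∃! p : Fin ℓ × 𝕊, g p.1 p.2 = z)
    {R : ℝ} {n : ℕ} {z : 𝕊 × 𝕊} {v : Fin 2 → ℝ} {e : (Fin n → Fin ℓ) → 𝕊 × 𝕊}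
    (he1 : ∀ α, (skew E τ)^[n] (e α) = z ∧ (e α).1 = codePt g α z.1)
    (he2 : ∀ ζ, (skew E τ)^[n] ζ = z → ∃ α, ζ = e α) :
    (coneSet E τ R n z v).ncard
      = (Finset.univ.filter
          (fun α => v ∈ (Jacn E τ n (e α)).mulVec '' E.cone R)).card := by
  rw [coneSet_eq_image hg_part he1 he2,
    Set.ncard_image_of_injective _ (e_inj hg_part he1)]
  rw [Set.ncard_eq_toFinset_card']
  congr 1
  ext α
  simp

lemma coneSet_finite
    (hg_part : ∀ z : 𝕊, ∃! p : Fin ℓ × 𝕊, g p.1 p.2 = z)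
    {R : ℝ} {n : ℕ} {z : 𝕊 × 𝕊} {v : Fin 2 → ℝ} {e : (Fin n → Fin ℓ) → 𝕊 × 𝕊}
    (he1 : ∀ α, (skew E τ)^[n] (e α) = z ∧ (e α).1 = codePt g α z.1)
    (he2 : ∀ ζ, (skew E τ)^[n] ζ = z → ∃ α, ζ = e α) :
    (coneSet E τ R n z v).Finite := by
  rw [coneSet_eq_image hg_part he1 he2]
  exact (Set.finite_range e).subset (Set.image_subset_range _ _)

lemma count_bound
    (hg_sec : ∀ (j : Fin ℓ) (y : 𝕊), E.map (g j y) = y)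
    (hg_part : ∀ z : 𝕊, ∃! p : Fin ℓ × 𝕊, g p.1 p.2 = z)
    (R : ℝ) (n : ℕ) (z : 𝕊 × 𝕊) (v : Fin 2 → ℝ) :
    (coneSet E τ R n z v).ncard ≤ ℓ ^ n := by
  obtain ⟨e, he1, he2⟩ := branches E τ hg_sec hg_part n z
  rw [coneSet_ncard hg_part he1 he2]
  calc (Finset.univ.filter _).card ≤ (Finset.univ : Finset (Fin n → Fin ℓ)).card :=
        Finset.card_filter_le _ _
  _ = ℓ ^ n := by rw [Finset.card_univ, Fintype.card_fun, Fintype.card_fin, Fintype.card_fin]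

lemma nQ_bddAbove
    (hg_sec : ∀ (j : Fin ℓ) (y : 𝕊), E.map (g j y) = y)
    (hg_part : ∀ z : 𝕊, ∃! p : Fin ℓ × 𝕊, g p.1 p.2 = z)
    (R : ℝ) (n : ℕ) :
    ∀ c ∈ {c : ℝ | ∃ z v, IsUnitVec v ∧ c = ((coneSet E τ R n z v).ncard : ℝ)},
      c ≤ (ℓ : ℝ) ^ n := by
  rintro c ⟨z, v, -, rfl⟩
  have := count_bound (τ := τ) hg_sec hg_part R n z v
  calc ((coneSet E τ R n z v).ncard : ℝ) ≤ ((ℓ ^ n : ℕ) : ℝ) := by exact_mod_cast this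
  _ = (ℓ : ℝ) ^ n := by push_cast; ring

lemma count_le_nQ
    (hg_sec : ∀ (j : Fin ℓ) (y : 𝕊), E.map (g j y) = y)
    (hg_part : ∀ z : 𝕊, ∃! p : Fin ℓ × 𝕊, g p.1 p.2 = z)
    (R : ℝ) (n : ℕ) (z : 𝕊 × 𝕊) {v : Fin 2 → ℝ} (hv : IsUnitVec v) :
    ((coneSet E τ R n z v).ncard : ℝ) ≤ nQ E τ R n := by
  rw [nQ_eq_sSup]
  exact le_csSup ⟨(ℓ:ℝ)^n, nQ_bddAbove hg_sec hg_part R n⟩ ⟨z, v, hv, rfl⟩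

lemma baseUnitVec : IsUnitVec (fun i : Fin 2 => if i = 0 then (1:ℝ) else 0) := by
  show (if (0 : Fin 2) = 0 then (1:ℝ) else 0) ^ 2 + (if (1 : Fin 2) = 0 then (1:ℝ) else 0) ^ 2 = 1
  norm_num

lemma nQ_attained
    (hg_sec : ∀ (j : Fin ℓ) (y : 𝕊), E.map (g j y) = y)
    (hg_part : ∀ z : 𝕊, ∃! p : Fin ℓ × 𝕊, g p.1 p.2 = z)
    (R : ℝ) (n : ℕ) :
    ∃ z v, IsUnitVec v ∧ nQ E τ R n = ((coneSet E τ R n z v).ncard : ℝ) := by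
  have hne : {c : ℝ | ∃ z v, IsUnitVec v ∧ c = ((coneSet E τ R n z v).ncard : ℝ)}.Nonempty :=
    ⟨_, ((0:𝕊),(0:𝕊)), _, baseUnitVec, rfl⟩
  have hfin : {c : ℝ | ∃ z v, IsUnitVec v ∧ c = ((coneSet E τ R n z v).ncard : ℝ)}.Finite := by
    apply (((Set.finite_Iic (ℓ^n : ℕ)).image (fun k : ℕ => (k:ℝ)))).subset
    rintro c ⟨z, v, hv, rfl⟩
    exact ⟨(coneSet E τ R n z v).ncard, count_bound hg_sec hg_part R n z v, rfl⟩
  have := hne.csSup_mem hfin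
  rw [← nQ_eq_sSup] at this
  exact this

lemma one_le_nQ (hl : 0 < ℓ)
    (hg_sec : ∀ (j : Fin ℓ) (y : 𝕊), E.map (g j y) = y)
    (hg_part : ∀ z : 𝕊, ∃! p : Fin ℓ × 𝕊, g p.1 p.2 = z)
    (hs1 : 1 ≤ s) {R : ℝ} (hR0 : 0 ≤ R) (n : ℕ) :
    1 ≤ nQ E τ R n := by
  obtain ⟨e, he1, he2⟩ := branches E τ hg_sec hg_part n ((0:𝕊),(0:𝕊))
  set ζ := e (fun _ => (⟨0, hl⟩ : Fin ℓ))
  set w0 : Fin 2 → ℝ := fun i => if i = 0 then (1:ℝ) else 0 with hw0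
  have hw0K : w0 ∈ E.cone R := by
    show |w0 1| ≤ R / (E.lam - 1) * |w0 0|
    have : w0 1 = 0 := by norm_num [hw0]
    have h0 : w0 0 = 1 := by norm_num [hw0]
    rw [this, h0, abs_zero, abs_one, mul_one]
    have := E.one_lt_lam
    exact div_nonneg hR0 (by linarith)
  set u := (Jacn E τ n ζ).mulVec w0 with hu
  have hu0 : u 0 ≠ 0 := by
    obtain ⟨h01, h11, hP1, hP2, hc⟩ := Jacn_struct E τ hs1 n ζ
    have : u 0 = (Jacn E τ n ζ) 0 0 * w0 0 + (Jacn E τ n ζ) 0 1 * w0 1 := mulVec_fin2 _ _ _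
    rw [this, h01]
    have h0 : w0 0 = 1 := by norm_num [hw0]
    rw [h0]
    have hpos : (0:ℝ) < (Jacn E τ n ζ) 0 0 :=
      lt_of_lt_of_le (pow_pos (by linarith [E.one_lt_lam]) n) hP1
    simp
    linarith
  have hune : u ≠ 0 := fun h => hu0 (by rw [h]; rfl)
  obtain ⟨c, hc0, hcu⟩ := exists_unit_smul hune
  have hmem : ζ ∈ coneSet E τ R n ((0:𝕊),(0:𝕊)) (c • u) := by
    refine ⟨(he1 _).1, ?_⟩
    exact smul_mem_image_cone E c ⟨w0, hw0K, rfl⟩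
  have hfin := coneSet_finite (v := c • u) (R := R) hg_part he1 he2
  have hcard : 0 < (coneSet E τ R n ((0:𝕊),(0:𝕊)) (c • u)).ncard :=
    (Set.ncard_pos hfin).mpr ⟨ζ, hmem⟩
  calc (1:ℝ) = ((1:ℕ):ℝ) := by norm_num
  _ ≤ ((coneSet E τ R n ((0:𝕊),(0:𝕊)) (c • u)).ncard : ℝ) := by exact_mod_cast hcard
  _ ≤ nQ E τ R n := count_le_nQ hg_sec hg_part R n _ hcu

lemma iter_branch
    (hg_sec : ∀ (j : Fin ℓ) (y : 𝕊), E.map (g j y) = y)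
    (hg_part : ∀ z : 𝕊, ∃! p : Fin ℓ × 𝕊, g p.1 p.2 = z)
    {L p : ℕ} (hpL : p ≤ L) {z : 𝕊 × 𝕊}
    {e : (Fin L → Fin ℓ) → 𝕊 × 𝕊}
    (he1 : ∀ α, (skew E τ)^[L] (e α) = z ∧ (e α).1 = codePt g α z.1)
    {e' : (Fin p → Fin ℓ) → 𝕊 × 𝕊}
    (he1' : ∀ β, (skew E τ)^[p] (e' β) = z ∧ (e' β).1 = codePt g β z.1)
    (he2' : ∀ ζ, (skew E τ)^[p] ζ = z → ∃ β, ζ = e' β)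
    (α : Fin L → Fin ℓ) :
    (skew E τ)^[L - p] (e α) = e' (trunc α p hpL) := by
  apply fiber_eq_of_fst hg_part he1' he2'
  · rw [← Function.iterate_add_apply, Nat.add_sub_cancel' hpL]
    exact (he1 α).1
  · exact (he1' _).1
  · rw [skew_iter_fst, (he1 α).2, Emap_iter_codePt E hg_sec L p hpL α z.1, (he1' _).2]

lemma Jacn_split
    (hg_sec : ∀ (j : Fin ℓ) (y : 𝕊), E.map (g j y) = y)
    (hg_part : ∀ z : 𝕊, ∃! p : Fin ℓ × 𝕊, g p.1 p.2 = z)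
    {L p : ℕ} (hpL : p ≤ L) {z : 𝕊 × 𝕊}
    {e : (Fin L → Fin ℓ) → 𝕊 × 𝕊}
    (he1 : ∀ α, (skew E τ)^[L] (e α) = z ∧ (e α).1 = codePt g α z.1)
    {e' : (Fin p → Fin ℓ) → 𝕊 × 𝕊}
    (he1' : ∀ β, (skew E τ)^[p] (e' β) = z ∧ (e' β).1 = codePt g β z.1)
    (he2' : ∀ ζ, (skew E τ)^[p] ζ = z → ∃ β, ζ = e' β)
    (α : Fin L → Fin ℓ) :
    Jacn E τ L (e α) = Jacn E τ p (e' (trunc α p hpL)) * Jacn E τ (L - p) (e α) := by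
  have h := Jacn_add E τ p (L - p) (e α)
  rw [Nat.add_sub_cancel' hpL] at h
  rw [h, iter_branch hg_sec hg_part hpL he1 he1' he2' α]

lemma fiber_card_le
    (hg_sec : ∀ (j : Fin ℓ) (y : 𝕊), E.map (g j y) = y)
    (hg_part : ∀ z : 𝕊, ∃! p : Fin ℓ × 𝕊, g p.1 p.2 = z)
    (hs1 : 1 ≤ s) {R : ℝ}
    {L p : ℕ} (hpL : p ≤ L) {z : 𝕊 × 𝕊} {v : Fin 2 → ℝ} (hv : IsUnitVec v)
    {e : (Fin L → Fin ℓ) → 𝕊 × 𝕊}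
    (he1 : ∀ α, (skew E τ)^[L] (e α) = z ∧ (e α).1 = codePt g α z.1)
    (β : Fin p → Fin ℓ) (A : Finset (Fin L → Fin ℓ))
    (hA : ∀ α ∈ A, trunc α p hpL = β ∧ v ∈ (Jacn E τ L (e α)).mulVec '' E.cone R) :
    (A.card : ℝ) ≤ nQ E τ R (L - p) := by
  obtain ⟨e', he1', he2'⟩ := branches E τ hg_sec hg_part p z
  set M := Jacn E τ p (e' β) with hM
  have hdet : IsUnit M.det := Jacn_det_isUnit E τ hs1 p (e' β)
  set u := M⁻¹.mulVec v with hu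
  have hMu : M.mulVec u = v := by
    rw [hu, Matrix.mulVec_mulVec, Matrix.mul_nonsing_inv M hdet, Matrix.one_mulVec]
  have hune : u ≠ 0 := by
    intro h0
    apply unitVec_ne_zero hv
    rw [← hMu, h0, Matrix.mulVec_zero]
  obtain ⟨c, hc0, hcu⟩ := exists_unit_smul hune
  have hmaps : ∀ α ∈ A, e α ∈ coneSet E τ R (L - p) (e' β) (c • u) := by
    intro α hα
    obtain ⟨hβ, hcone⟩ := hA α hα
    have hfib : (skew E τ)^[L - p] (e α) = e' β := by
      have := iter_branch hg_sec hg_part hpL he1 he1' he2' α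
      rwa [hβ] at this
    refine ⟨hfib, ?_⟩
    have hsplit : Jacn E τ L (e α) = M * Jacn E τ (L - p) (e α) := by
      have := Jacn_split hg_sec hg_part hpL he1 he1' he2' α
      rwa [hβ] at this
    obtain ⟨w, hwK, hwv⟩ := hcone
    have hMv : M.mulVec ((Jacn E τ (L - p) (e α)).mulVec w) = v := by
      rw [Matrix.mulVec_mulVec, ← hsplit]
      exact hwv
    have hue : (Jacn E τ (L - p) (e α)).mulVec w = u := by
      have h2 := mulVec_cancel hdet hMv
      rw [← hu] at h2
      exact h2
    exact smul_mem_image_cone E c ⟨w, hwK, hue⟩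
  obtain ⟨e'', he1'', he2''⟩ := branches E τ hg_sec hg_part (L - p) (e' β)
  have hfin := coneSet_finite (v := c • u) (R := R) hg_part he1'' he2''
  have hcard : A.card ≤ (coneSet E τ R (L - p) (e' β) (c • u)).ncard := by
    rw [Set.ncard_eq_toFinset_card _ hfin]
    apply Finset.card_le_card_of_injOn e
    · intro α hα
      simpa using hmaps α hα
    · intro a _ b _ h
      exact e_inj hg_part he1 h
  calc (A.card : ℝ) ≤ ((coneSet E τ R (L - p) (e' β) (c • u)).ncard : ℝ) := by
        exact_mod_cast hcard
  _ ≤ nQ E τ R (L - p) := count_le_nQ hg_sec hg_part R (L - p) _ hcu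

lemma nQ_split (hl : 0 < ℓ)
    (hg_sec : ∀ (j : Fin ℓ) (y : 𝕊), E.map (g j y) = y)
    (hg_part : ∀ z : 𝕊, ∃! p : Fin ℓ × 𝕊, g p.1 p.2 = z)
    (hs1 : 1 ≤ s) {R : ℝ} (hRd : τ.dsup ≤ R)
    {L p : ℕ} (hpL : p ≤ L) :
    nQ E τ R L ≤ nQ E τ R p * nQ E τ R (L - p) := by
  have hR0 : 0 ≤ R := le_trans (dsup_nonneg τ hs1) hRd
  obtain ⟨z, v, hv, hEq⟩ := nQ_attained hg_sec hg_part R L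
  obtain ⟨e, he1, he2⟩ := branches E τ hg_sec hg_part L z
  obtain ⟨e', he1', he2'⟩ := branches E τ hg_sec hg_part p z
  rw [hEq, coneSet_ncard hg_part he1 he2]
  set T := Finset.univ.filter
    (fun α : Fin L → Fin ℓ => v ∈ (Jacn E τ L (e α)).mulVec '' E.cone R) with hT
  set Tp := Finset.univ.filter
    (fun β : Fin p → Fin ℓ => v ∈ (Jacn E τ p (e' β)).mulVec '' E.cone R) with hTp
  have hmapsto : ∀ α ∈ T, trunc α p hpL ∈ Tp := by
    intro α hα
    have hcone : v ∈ (Jacn E τ L (e α)).mulVec '' E.cone R := by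
      simpa [hT] using hα
    obtain ⟨w, hwK, hwv⟩ := hcone
    have hsplit := Jacn_split hg_sec hg_part hpL he1 he1' he2' α
    have : v ∈ (Jacn E τ p (e' (trunc α p hpL))).mulVec '' E.cone R := by
      refine ⟨(Jacn E τ (L - p) (e α)).mulVec w,
        Jacn_cone_invariant E τ hs1 hRd _ _ hwK, ?_⟩
      rw [Matrix.mulVec_mulVec, ← hsplit]
      exact hwv
    simp only [hTp, Finset.mem_filter, Finset.mem_univ, true_and]
    exact this
  have hsum : (T.card : ℝ)
      = ∑ β ∈ Tp, ((T.filter (fun α => trunc α p hpL = β)).card : ℝ) := by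
    rw [← Nat.cast_sum]
    exact_mod_cast congrArg (Nat.cast (R := ℝ))
      (Finset.card_eq_sum_card_fiberwise hmapsto)
  rw [hsum]
  have hfiber : ∀ β ∈ Tp,
      ((T.filter (fun α => trunc α p hpL = β)).card : ℝ) ≤ nQ E τ R (L - p) := by
    intro β _
    apply fiber_card_le hg_sec hg_part hs1 hpL hv he1 β
    intro α hα
    rw [Finset.mem_filter] at hα
    obtain ⟨hαT, hβ⟩ := hα
    exact ⟨hβ, by simpa [hT] using hαT⟩
  calc ∑ β ∈ Tp, ((T.filter (fun α => trunc α p hpL = β)).card : ℝ)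
      ≤ ∑ _β ∈ Tp, nQ E τ R (L - p) := Finset.sum_le_sum hfiber
  _ = (Tp.card : ℝ) * nQ E τ R (L - p) := by
      rw [Finset.sum_const, nsmul_eq_mul]
  _ ≤ nQ E τ R p * nQ E τ R (L - p) := by
      apply mul_le_mul_of_nonneg_right _ (le_trans zero_le_one
        (one_le_nQ (τ := τ) (g := g) hl hg_sec hg_part hs1 hR0 (L - p)))
      have : (Tp.card : ℝ) = ((coneSet E τ R p z v).ncard : ℝ) := by
        rw [coneSet_ncard hg_part he1' he2']
      rw [this]
      exact count_le_nQ hg_sec hg_part R p z hv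

lemma nQ_shift (hl : 0 < ℓ)
    (hg_sec : ∀ (j : Fin ℓ) (y : 𝕊), E.map (g j y) = y)
    (hg_part : ∀ z : 𝕊, ∃! p : Fin ℓ × 𝕊, g p.1 p.2 = z)
    (hs1 : 1 ≤ s) {R R' : ℝ} (hRd : τ.dsup < R) (hR'0 : 0 ≤ R')
    {L p : ℕ} (hpL : p ≤ L) (hshrink : R' / (R - τ.dsup) ≤ E.lam ^ (L - p)) :
    nQ E τ R' L ≤ nQ E τ R p * (ℓ:ℝ) ^ (L - p) := by
  obtain ⟨z, v, hv, hEq⟩ := nQ_attained hg_sec hg_part R' L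
  obtain ⟨e, he1, he2⟩ := branches E τ hg_sec hg_part L z
  obtain ⟨e', he1', he2'⟩ := branches E τ hg_sec hg_part p z
  rw [hEq, coneSet_ncard hg_part he1 he2]
  set T := Finset.univ.filter
    (fun α : Fin L → Fin ℓ => v ∈ (Jacn E τ L (e α)).mulVec '' E.cone R') with hT
  set Tp := Finset.univ.filter
    (fun β : Fin p → Fin ℓ => v ∈ (Jacn E τ p (e' β)).mulVec '' E.cone R) with hTp
  have hmapsto : ∀ α ∈ T, trunc α p hpL ∈ Tp := by
    intro α hα
    have hcone : v ∈ (Jacn E τ L (e α)).mulVec '' E.cone R' := by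
      simpa [hT] using hα
    obtain ⟨w, hwK, hwv⟩ := hcone
    have hsplit := Jacn_split hg_sec hg_part hpL he1 he1' he2' α
    have : v ∈ (Jacn E τ p (e' (trunc α p hpL))).mulVec '' E.cone R := by
      refine ⟨(Jacn E τ (L - p) (e α)).mulVec w,
        Jacn_cone_shrink E τ hs1 hRd hR'0 (L - p) hshrink _ hwK, ?_⟩
      rw [Matrix.mulVec_mulVec, ← hsplit]
      exact hwv
    simp only [hTp, Finset.mem_filter, Finset.mem_univ, true_and]
    exact this
  have hsum : (T.card : ℝ)
      = ∑ β ∈ Tp, ((T.filter (fun α => trunc α p hpL = β)).card : ℝ) := by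
    rw [← Nat.cast_sum]
    exact_mod_cast congrArg (Nat.cast (R := ℝ))
      (Finset.card_eq_sum_card_fiberwise hmapsto)
  rw [hsum]
  have hfiber : ∀ β ∈ Tp,
      ((T.filter (fun α => trunc α p hpL = β)).card : ℝ) ≤ (ℓ:ℝ) ^ (L - p) := by
    intro β _
    have hinj : Set.InjOn (fun (α : Fin L → Fin ℓ) (i : Fin (L - p)) =>
        α (⟨p + i.1, by omega⟩ : Fin L))
        ((T.filter (fun α => trunc α p hpL = β)) : Set _) := by
      intro a ha b hb h
      rw [Finset.mem_coe, Finset.mem_filter] at ha hb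
      funext i
      by_cases hip : i.1 < p
      · have ha' := congrFun ha.2 (⟨i.1, hip⟩ : Fin p)
        have hb' := congrFun hb.2 (⟨i.1, hip⟩ : Fin p)
        have hcast : Fin.castLE hpL (⟨i.1, hip⟩ : Fin p) = i := Fin.ext rfl
        rw [trunc, hcast] at ha' hb'
        rw [ha', hb']
      · have hfin : (⟨p + (i.1 - p), by omega⟩ : Fin L) = i :=
          Fin.ext (show p + (i.1 - p) = i.1 by omega)
        have h2 := congrFun h (⟨i.1 - p, by omega⟩ : Fin (L - p))
        simp only at h2
        rw [hfin] at h2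
        exact h2
    calc ((T.filter (fun α => trunc α p hpL = β)).card : ℝ)
        ≤ ((Finset.univ : Finset (Fin (L - p) → Fin ℓ)).card : ℝ) := by
          exact_mod_cast Finset.card_le_card_of_injOn _
            (fun a _ => Finset.mem_univ _) hinj
    _ = (ℓ:ℝ) ^ (L - p) := by
        rw [Finset.card_univ, Fintype.card_fun, Fintype.card_fin, Fintype.card_fin]
        push_cast; ring
  calc ∑ β ∈ Tp, ((T.filter (fun α => trunc α p hpL = β)).card : ℝ)
      ≤ ∑ _β ∈ Tp, (ℓ:ℝ) ^ (L - p) := Finset.sum_le_sum hfiber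
  _ = (Tp.card : ℝ) * (ℓ:ℝ) ^ (L - p) := by rw [Finset.sum_const, nsmul_eq_mul]
  _ ≤ nQ E τ R p * (ℓ:ℝ) ^ (L - p) := by
      apply mul_le_mul_of_nonneg_right _ (by positivity)
      have : (Tp.card : ℝ) = ((coneSet E τ R p z v).ncard : ℝ) := by
        rw [coneSet_ncard hg_part he1' he2']
      rw [this]
      exact count_le_nQ hg_sec hg_part R p z hv

lemma nQ_pos (hl : 0 < ℓ)
    (hg_sec : ∀ (j : Fin ℓ) (y : 𝕊), E.map (g j y) = y)
    (hg_part : ∀ z : 𝕊, ∃! p : Fin ℓ × 𝕊, g p.1 p.2 = z)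
    (hs1 : 1 ≤ s) {R : ℝ} (hR0 : 0 ≤ R) (n : ℕ) : 0 < nQ E τ R n :=
  lt_of_lt_of_le one_pos (one_le_nQ (τ := τ) (g := g) hl hg_sec hg_part hs1 hR0 n)

lemma nQ_subadditive (hl : 0 < ℓ)
    (hg_sec : ∀ (j : Fin ℓ) (y : 𝕊), E.map (g j y) = y)
    (hg_part : ∀ z : 𝕊, ∃! p : Fin ℓ × 𝕊, g p.1 p.2 = z)
    (hs1 : 1 ≤ s) {R : ℝ} (hRd : τ.dsup ≤ R) :
    Subadditive (fun n => Real.log (nQ E τ R n)) := by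
  intro m n
  have hR0 : 0 ≤ R := le_trans (dsup_nonneg τ hs1) hRd
  have h := nQ_split hl hg_sec hg_part hs1 hRd (p := m) (L := m + n) (by omega)
  rw [Nat.add_sub_cancel_left] at h
  have h1 := nQ_pos (τ := τ) (g := g) hl hg_sec hg_part hs1 hR0 (m + n)
  have h2 := nQ_pos (τ := τ) (g := g) hl hg_sec hg_part hs1 hR0 m
  have h3 := nQ_pos (τ := τ) (g := g) hl hg_sec hg_part hs1 hR0 n
  calc Real.log (nQ E τ R (m + n)) ≤ Real.log (nQ E τ R m * nQ E τ R n) :=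
        Real.log_le_log h1 h
  _ = _ := Real.log_mul (ne_of_gt h2) (ne_of_gt h3)

lemma nQ_log_nonneg (hl : 0 < ℓ)
    (hg_sec : ∀ (j : Fin ℓ) (y : 𝕊), E.map (g j y) = y)
    (hg_part : ∀ z : 𝕊, ∃! p : Fin ℓ × 𝕊, g p.1 p.2 = z)
    (hs1 : 1 ≤ s) {R : ℝ} (hR0 : 0 ≤ R) (n : ℕ) :
    0 ≤ Real.log (nQ E τ R n) :=
  Real.log_nonneg (one_le_nQ (τ := τ) (g := g) hl hg_sec hg_part hs1 hR0 n)

lemma nQ_bddBelow (hl : 0 < ℓ)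
    (hg_sec : ∀ (j : Fin ℓ) (y : 𝕊), E.map (g j y) = y)
    (hg_part : ∀ z : 𝕊, ∃! p : Fin ℓ × 𝕊, g p.1 p.2 = z)
    (hs1 : 1 ≤ s) {R : ℝ} (hR0 : 0 ≤ R) :
    BddBelow (Set.range fun n : ℕ => Real.log (nQ E τ R n) / n) := by
  refine ⟨0, ?_⟩
  rintro x ⟨n, rfl⟩
  exact div_nonneg (nQ_log_nonneg (τ := τ) (g := g) hl hg_sec hg_part hs1 hR0 n) (Nat.cast_nonneg n)

lemma nQ_tendsto (hl : 0 < ℓ)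
    (hg_sec : ∀ (j : Fin ℓ) (y : 𝕊), E.map (g j y) = y)
    (hg_part : ∀ z : 𝕊, ∃! p : Fin ℓ × 𝕊, g p.1 p.2 = z)
    (hs1 : 1 ≤ s) {R : ℝ} (hRd : τ.dsup ≤ R) :
    Tendsto (fun n : ℕ => nQ E τ R n ^ ((n:ℝ)⁻¹)) atTop
      (nhds (Real.exp (nQ_subadditive hl hg_sec hg_part hs1 hRd).lim)) := by
  have hR0 : 0 ≤ R := le_trans (dsup_nonneg τ hs1) hRd
  have h1 := (nQ_subadditive hl hg_sec hg_part hs1 hRd).tendsto_lim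
    (nQ_bddBelow hl hg_sec hg_part hs1 hR0)
  have h2 := (Real.continuous_exp.tendsto _).comp h1
  apply h2.congr'
  filter_upwards [eventually_ge_atTop 1] with n hn
  have hpos := nQ_pos (τ := τ) (g := g) hl hg_sec hg_part hs1 hR0 n
  show Real.exp (Real.log (nQ E τ R n) / n) = nQ E τ R n ^ ((n:ℝ)⁻¹)
  rw [Real.rpow_def_of_pos hpos, div_eq_mul_inv]

lemma nQ_lim_le (hl : 0 < ℓ)
    (hg_sec : ∀ (j : Fin ℓ) (y : 𝕊), E.map (g j y) = y)
    (hg_part : ∀ z : 𝕊, ∃! p : Fin ℓ × 𝕊, g p.1 p.2 = z)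
    (hs1 : 1 ≤ s) {R : ℝ} (hRd : τ.dsup ≤ R) {n : ℕ} (hn : 1 ≤ n) :
    (nQ_subadditive (τ := τ) (g := g) hl hg_sec hg_part hs1 hRd).lim
      ≤ Real.log (nQ E τ R n) / n := by
  have hR0 : 0 ≤ R := le_trans (dsup_nonneg τ hs1) hRd
  rw [Subadditive.lim]
  apply csInf_le
  · refine ⟨0, ?_⟩
    rintro x ⟨m, -, rfl⟩
    exact div_nonneg (nQ_log_nonneg (τ := τ) (g := g) hl hg_sec hg_part hs1 hR0 m) (Nat.cast_nonneg m)
  · exact ⟨n, hn, rfl⟩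

lemma nQ_ge_exp (hl : 0 < ℓ)
    (hg_sec : ∀ (j : Fin ℓ) (y : 𝕊), E.map (g j y) = y)
    (hg_part : ∀ z : 𝕊, ∃! p : Fin ℓ × 𝕊, g p.1 p.2 = z)
    (hs1 : 1 ≤ s) {R : ℝ} (hRd : τ.dsup ≤ R) {ρ : ℝ}
    (hρ : ρ ≤ (nQ_subadditive (τ := τ) (g := g) hl hg_sec hg_part hs1 hRd).lim)
    {n : ℕ} (hn : 1 ≤ n) :
    Real.exp (ρ * n) ≤ nQ E τ R n := by
  have hR0 : 0 ≤ R := le_trans (dsup_nonneg τ hs1) hRd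
  have hpos := nQ_pos (τ := τ) (g := g) hl hg_sec hg_part hs1 hR0 n
  have h1 := le_trans hρ (nQ_lim_le hl hg_sec hg_part hs1 hRd hn)
  have hn' : (0:ℝ) < n := by exact_mod_cast hn
  have h2 : ρ * n ≤ Real.log (nQ E τ R n) := by
    rw [div_eq_mul_inv] at h1
    calc ρ * n ≤ (Real.log (nQ E τ R n) * (n:ℝ)⁻¹) * n := by
          apply mul_le_mul_of_nonneg_right h1 (le_of_lt hn')
    _ = Real.log (nQ E τ R n) := by field_simp
  calc Real.exp (ρ * n) ≤ Real.exp (Real.log (nQ E τ R n)) := Real.exp_le_exp.mpr h2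
  _ = nQ E τ R n := Real.exp_log hpos

lemma nQ_lim_comparison (hl : 0 < ℓ)
    (hg_sec : ∀ (j : Fin ℓ) (y : 𝕊), E.map (g j y) = y)
    (hg_part : ∀ z : 𝕊, ∃! p : Fin ℓ × 𝕊, g p.1 p.2 = z)
    (hs1 : 1 ≤ s) {R₁ R₂ : ℝ} (h1 : τ.dsup < R₁) (h2 : τ.dsup < R₂) :
    (nQ_subadditive (τ := τ) (g := g) hl hg_sec hg_part hs1 h1.le).lim
      ≤ (nQ_subadditive (τ := τ) (g := g) hl hg_sec hg_part hs1 h2.le).lim := by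
  have hl0 : 0 < ℓ := hl
  have hR10 : 0 ≤ R₁ := le_trans (dsup_nonneg τ hs1) h1.le
  have hR20 : 0 ≤ R₂ := le_trans (dsup_nonneg τ hs1) h2.le
  obtain ⟨m₀, hm₀⟩ := pow_unbounded_of_one_lt (R₁ / (R₂ - τ.dsup)) E.one_lt_lam
  have hshift : ∀ n : ℕ, nQ E τ R₁ (n + m₀) ≤ nQ E τ R₂ n * (ℓ:ℝ) ^ m₀ := by
    intro n
    have h := nQ_shift hl0 hg_sec hg_part hs1 h2 hR10 (p := n) (L := n + m₀)
      (by omega) (by rw [Nat.add_sub_cancel_left]; exact hm₀.le)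
    rwa [Nat.add_sub_cancel_left] at h
  set u₁ := fun n : ℕ => Real.log (nQ E τ R₁ n) with hu₁
  set u₂ := fun n : ℕ => Real.log (nQ E τ R₂ n) with hu₂
  have hlog : ∀ n : ℕ, 1 ≤ n →
      u₁ (n + m₀) / ((n:ℝ) + m₀) ≤ u₂ n / n + ((m₀:ℝ) * Real.log ℓ) / n := by
    intro n hn
    have hp1 := nQ_pos (τ := τ) (g := g) hl0 hg_sec hg_part hs1 hR10 (n + m₀)
    have hp2 := nQ_pos (τ := τ) (g := g) hl0 hg_sec hg_part hs1 hR20 n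
    have hlℝ : (0:ℝ) < (ℓ:ℝ) ^ m₀ := by positivity
    have ha : u₁ (n + m₀) ≤ u₂ n + (m₀:ℝ) * Real.log ℓ := by
      calc u₁ (n + m₀) ≤ Real.log (nQ E τ R₂ n * (ℓ:ℝ) ^ m₀) :=
            Real.log_le_log hp1 (hshift n)
      _ = u₂ n + (m₀:ℝ) * Real.log ℓ := by
          rw [Real.log_mul (ne_of_gt hp2) (ne_of_gt hlℝ), Real.log_pow]
    have hnpos : (0:ℝ) < n := by exact_mod_cast hn
    have hm0 : (0:ℝ) ≤ (m₀:ℝ) := Nat.cast_nonneg m₀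
    have hnm : (0:ℝ) < (n:ℝ) + m₀ := by linarith
    have hu2 : 0 ≤ u₂ n := nQ_log_nonneg (τ := τ) (g := g) hl0 hg_sec hg_part hs1 hR20 n
    have hlog2 : 0 ≤ Real.log ℓ := Real.log_nonneg (by exact_mod_cast hl0)
    have e1 : u₂ n / ((n:ℝ) + m₀) ≤ u₂ n / n :=
      div_le_div_of_nonneg_left hu2 hnpos (by linarith)
    have e2 : ((m₀:ℝ) * Real.log ℓ) / ((n:ℝ) + m₀) ≤ ((m₀:ℝ) * Real.log ℓ) / n :=
      div_le_div_of_nonneg_left (by positivity) hnpos (by linarith)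
    calc u₁ (n + m₀) / ((n:ℝ) + m₀) ≤ (u₂ n + (m₀:ℝ) * Real.log ℓ) / ((n:ℝ) + m₀) := by
          gcongr
    _ = u₂ n / ((n:ℝ) + m₀) + ((m₀:ℝ) * Real.log ℓ) / ((n:ℝ) + m₀) := add_div _ _ _
    _ ≤ u₂ n / n + ((m₀:ℝ) * Real.log ℓ) / n := add_le_add e1 e2
  have hbdd1 := nQ_bddBelow (τ := τ) (g := g) (R := R₁) hl0 hg_sec hg_part hs1 hR10
  have hbdd2 := nQ_bddBelow (τ := τ) (g := g) (R := R₂) hl0 hg_sec hg_part hs1 hR20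
  have t1 : Tendsto (fun n : ℕ => u₁ (n + m₀) / ((n:ℝ) + m₀)) atTop
      (nhds (nQ_subadditive (τ := τ) (g := g) hl0 hg_sec hg_part hs1 h1.le).lim) := by
    have h := ((nQ_subadditive (τ := τ) (g := g) hl0 hg_sec hg_part hs1 h1.le).tendsto_lim
      hbdd1).comp (tendsto_add_atTop_nat m₀)
    apply h.congr
    intro n
    show u₁ (n + m₀) / ((n + m₀ : ℕ):ℝ) = _
    push_cast
    ring_nf
  have t2 : Tendsto (fun n : ℕ => u₂ n / n + ((m₀:ℝ) * Real.log ℓ) / n) atTop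
      (nhds ((nQ_subadditive (τ := τ) (g := g) hl0 hg_sec hg_part hs1 h2.le).lim + 0)) :=
    ((nQ_subadditive (τ := τ) (g := g) hl0 hg_sec hg_part hs1 h2.le).tendsto_lim hbdd2).add
      (tendsto_const_div_atTop_nhds_zero_nat _)
  have hle := le_of_tendsto_of_tendsto t1 t2 ?_
  · simpa using hle
  · filter_upwards [eventually_ge_atTop 1] with n hn
    exact hlog n hn

lemma nlim_eval {r ℓ : ℕ} {E : ExpMap r ℓ} {τ : CrFun (r : ℕ∞)} {g : Fin ℓ → 𝕊 → 𝕊}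
    (hl : 0 < ℓ) (hr1 : 1 ≤ (r : ℕ∞))
    (hg_sec : ∀ (j : Fin ℓ) (y : 𝕊), E.map (g j y) = y)
    (hg_part : ∀ z : 𝕊, ∃! p : Fin ℓ × 𝕊, g p.1 p.2 = z) :
    nlim E τ = Real.exp
      ((nQ_subadditive (τ := τ) (g := g) hl hg_sec hg_part hr1
        (le_of_lt (lt_add_of_pos_right _ one_pos))).lim) :=
  Tendsto.limUnder_eq (nQ_tendsto hl hg_sec hg_part hr1 (le_of_lt (lt_add_of_pos_right _ one_pos)))

lemma exists_good_time (hl : 0 < ℓ)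
    (hg_sec : ∀ (j : Fin ℓ) (y : 𝕊), E.map (g j y) = y)
    (hg_part : ∀ z : 𝕊, ∃! p : Fin ℓ × 𝕊, g p.1 p.2 = z)
    (hs1 : 1 ≤ s) {R : ℝ} (hRd : τ.dsup ≤ R)
    {ρ : ℝ} (hρpos : 0 < ρ)
    (hlow : ∀ n : ℕ, 1 ≤ n → Real.exp (ρ * n) ≤ nQ E τ R n)
    {q : ℕ} (hq1 : 1 ≤ q) (n₁ : ℕ) :
    ∃ n : ℕ, n₁ ≤ n ∧ q + 1 ≤ n ∧
      nQ E τ R (n - q) * Real.exp ((q:ℝ) * ρ / 2) ≤ nQ E τ R n := by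
  have hR0 : 0 ≤ R := le_trans (dsup_nonneg τ hs1) hRd
  by_contra hcon
  push_neg at hcon
  set m := max n₁ (q + 1) with hm
  have hm1 : 1 ≤ m := by omega
  have hstep : ∀ k : ℕ, nQ E τ R (m + k * q)
      ≤ nQ E τ R m * Real.exp ((k:ℝ) * ((q:ℝ) * ρ / 2)) := by
    intro k
    induction k with
    | zero => simp
    | succ k ih =>
      have harg : n₁ ≤ m + (k+1) * q := by
        have : n₁ ≤ m := le_max_left _ _
        nlinarith [Nat.zero_le (k * q), Nat.zero_le q]
      have harg2 : q + 1 ≤ m + (k+1) * q := by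
        have h1 : q + 1 ≤ m := le_max_right _ _
        have h2 : (k+1) * q = k * q + q := by ring
        omega
      have h := hcon (m + (k+1) * q) harg harg2
      have hsub : m + (k+1) * q - q = m + k * q := by
        have h2 : (k+1) * q = k * q + q := by ring
        omega
      rw [hsub] at h
      have hexp : (0:ℝ) < Real.exp ((q:ℝ) * ρ / 2) := Real.exp_pos _
      calc nQ E τ R (m + (k+1) * q)
          ≤ nQ E τ R (m + k * q) * Real.exp ((q:ℝ) * ρ / 2) := h.le
      _ ≤ (nQ E τ R m * Real.exp ((k:ℝ) * ((q:ℝ) * ρ / 2))) * Real.exp ((q:ℝ) * ρ / 2) :=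
          mul_le_mul_of_nonneg_right ih hexp.le
      _ = nQ E τ R m * Real.exp (((k:ℝ)+1) * ((q:ℝ) * ρ / 2)) := by
          rw [mul_assoc, ← Real.exp_add]; ring_nf
      _ = nQ E τ R m * Real.exp (((k+1 : ℕ):ℝ) * ((q:ℝ) * ρ / 2)) := by push_cast; ring_nf
  -- contradiction
  set C := nQ E τ R m with hC
  have hCpos : 0 < C := nQ_pos (τ := τ) (g := g) hl hg_sec hg_part hs1 hR0 m
  have hqρ : (0:ℝ) < (q:ℝ) * ρ / 2 := by
    have : (1:ℝ) ≤ (q:ℝ) := by exact_mod_cast hq1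
    nlinarith
  obtain ⟨k, hk⟩ := exists_nat_gt (Real.log C / ((q:ℝ) * ρ / 2))
  have hklarge : Real.log C < (k:ℝ) * ((q:ℝ) * ρ / 2) := by
    rw [div_lt_iff₀ hqρ] at hk
    linarith
  have hC2 : C < Real.exp ((k:ℝ) * ((q:ℝ) * ρ / 2)) := by
    calc C = Real.exp (Real.log C) := (Real.exp_log hCpos).symm
    _ < Real.exp ((k:ℝ) * ((q:ℝ) * ρ / 2)) := Real.exp_lt_exp.mpr hklarge
  -- but also exp(k q ρ/2) ≤ C
  have hup : Real.exp ((k:ℝ) * ((q:ℝ) * ρ / 2)) ≤ C := by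
    have h1 := hlow (m + k * q) (le_trans hm1 (Nat.le_add_right _ _))
    have h2 := hstep k
    have h3 : Real.exp ((k:ℝ) * ((q:ℝ) * ρ / 2)) * Real.exp ((k:ℝ) * ((q:ℝ) * ρ / 2))
        ≤ C * Real.exp ((k:ℝ) * ((q:ℝ) * ρ / 2)) := by
      calc Real.exp ((k:ℝ) * ((q:ℝ) * ρ / 2)) * Real.exp ((k:ℝ) * ((q:ℝ) * ρ / 2))
          = Real.exp ((k:ℝ) * ((q:ℝ) * ρ)) := by rw [← Real.exp_add]; ring_nf
      _ ≤ Real.exp (ρ * ((m : ℝ) + k * q)) := by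
          apply Real.exp_le_exp.mpr
          have hmpos : (0:ℝ) ≤ (m:ℝ) := Nat.cast_nonneg m
          nlinarith [Nat.cast_nonneg (α := ℝ) k, Nat.cast_nonneg (α := ℝ) q]
      _ ≤ nQ E τ R (m + k * q) := by
          have := h1
          rw [show (((m + k * q : ℕ)):ℝ) = (m:ℝ) + k * q by push_cast; ring] at this
          exact this
      _ ≤ C * Real.exp ((k:ℝ) * ((q:ℝ) * ρ / 2)) := h2
    exact le_of_mul_le_mul_right h3 (Real.exp_pos _)
  linarith

end Counting

end Stmt8Aux

open Stmt8Aux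


/-- Proposition 3.3. Suppose `g` is the system of inverse branches of `E`
coming from the symbolic coding (each branch is a right inverse of `E` and every point of
the circle lies in the image of exactly one branch, at a unique point). Fix `ρ > 0`, a
cover of `[log λ, log Λ]` by open intervals `I_j = (a_j, b_j)`, `j < J`, of length `< ρ/3`,
set `N = ⌈6 ρ⁻¹ log ⌈2Λ⌉⌉` and choose `q` with `(q+1) N e^{-qρ/2} < 1/(4J)`. If
`𝔫(τ) ≥ e^ρ`, then for arbitrarily large `n` there are a point `z₀ = (x,s) ∈ 𝕋²`, a unit
vector `v₀`, an index `j < J`, a set `B ⊆ A^q` with `#B = 2(q+1)N`, and sets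
`Σ(β) ⊆ A^n` for `β ∈ B` with `#Σ(β) ≥ e^{ρn} ℓ^{-q} / (2J)`, such that every `α ∈ Σ(β)`
satisfies `[α]_q = β`, `v₀ ∈ Df^n(x_α) K_R` and `(E^n)'(x_α) ∈ [e^{a_j n}, e^{b_j n}]`. -/
theorem stmt8 (r ℓ : ℕ) (hr : 2 ≤ r) (hl : 2 ≤ ℓ) (E : ExpMap r ℓ) (τ : CrFun r)
    (g : Fin ℓ → 𝕊 → 𝕊)
    (hg_sec : ∀ (j : Fin ℓ) (y : 𝕊), E.map (g j y) = y)
    (hg_part : ∀ z : 𝕊, ∃! p : Fin ℓ × 𝕊, g p.1 p.2 = z)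
    (R : ℝ) (hR : τ.dsup < R)
    (ρ : ℝ) (hρ : 0 < ρ)
    (J : ℕ) (hJ : 1 ≤ J) (a b : Fin J → ℝ)
    (hlen : ∀ j : Fin J, b j - a j < ρ / 3)
    (hcover : Set.Icc (Real.log E.lam) (Real.log E.Lam) ⊆ ⋃ j : Fin J, Set.Ioo (a j) (b j))
    (N : ℕ) (hN : N = ⌈6 / ρ * Real.log (⌈(2:ℝ) * E.Lam⌉₊ : ℝ)⌉₊)
    (q : ℕ) (hq : ((q + 1) * N : ℝ) * Real.exp (-(q : ℝ) * ρ / 2) < 1 / (4 * J))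
    (hcap : Real.exp ρ ≤ nlim E τ) :
    ∀ n₀ : ℕ, ∃ n : ℕ, n₀ ≤ n ∧ ∃ hqn : q ≤ n,
      ∃ (x : 𝕊) (s : 𝕊) (v₀ : Fin 2 → ℝ), IsUnitVec v₀ ∧
        ∃ (j : Fin J) (B : Finset (Fin q → Fin ℓ)), B.card = 2 * (q + 1) * N ∧
          ∃ Sig : (Fin q → Fin ℓ) → Finset (Fin n → Fin ℓ),
            ∀ β ∈ B,
              Real.exp (ρ * n) * (ℓ : ℝ) ^ (-(q : ℤ)) / (2 * J) ≤ ((Sig β).card : ℝ) ∧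
              ∀ α ∈ Sig β,
                trunc α q hqn = β ∧
                v₀ ∈ (JacnB E τ n (codePt g α x)).mulVec '' E.cone R ∧
                E.derivn n (codePt g α x) ∈
                  Set.Icc (Real.exp (a j * n)) (Real.exp (b j * n)) := by
  classical
  intro n₀
  have hl0 : 0 < ℓ := by omega
  have hr1 : (1:ℕ∞) ≤ (r:ℕ∞) := by exact_mod_cast (by omega : 1 ≤ r)
  have hJR : (1:ℝ) ≤ (J:ℝ) := by exact_mod_cast hJ
  have hJpos : (0:ℝ) < (J:ℝ) := by linarith
  have hR0 : 0 ≤ R := le_trans (dsup_nonneg τ hr1) hR.le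
  -- N ≥ 1
  have hΛ1 : 1 < E.Lam := lt_of_lt_of_le E.one_lt_lam E.lam_le_Lam
  have hceil2 : (2:ℝ) ≤ (⌈(2:ℝ) * E.Lam⌉₊ : ℝ) :=
    le_trans (by linarith) (Nat.le_ceil _)
  have hN1 : 1 ≤ N := by
    rw [hN]
    rw [Nat.one_le_ceil_iff]
    have hlog : 0 < Real.log (⌈(2:ℝ) * E.Lam⌉₊ : ℝ) := Real.log_pos (by linarith)
    positivity
  have hNR : (1:ℝ) ≤ (N:ℝ) := by exact_mod_cast hN1
  -- q ≥ 1
  have hq1 : 1 ≤ q := by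
    by_contra hcon
    have hq0 : q = 0 := by omega
    subst hq0
    have h14 : 1 / (4*(J:ℝ)) ≤ 1/4 :=
      one_div_le_one_div_of_le (by norm_num) (by linarith)
    have : ((0:ℕ) + 1 : ℝ) * (N:ℝ) * Real.exp (-(0:ℕ) * ρ / 2) = (N:ℝ) := by
      norm_num
    rw [this] at hq
    linarith
  -- exponential lower bound with cone parameter R
  have hρle : ρ ≤ (nQ_subadditive (τ := τ) (g := g) hl0 hg_sec hg_part hr1 hR.le).lim := by
    have h1 : Real.exp ρ ≤ Real.exp
        ((nQ_subadditive (τ := τ) (g := g) hl0 hg_sec hg_part hr1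
          (le_of_lt (lt_add_of_pos_right _ one_pos))).lim) := by
      rw [← nlim_eval hl0 hr1 hg_sec hg_part]
      exact hcap
    have h2 := Real.exp_le_exp.mp h1
    exact le_trans h2 (nQ_lim_comparison hl0 hg_sec hg_part hr1
      (lt_add_of_pos_right _ one_pos) hR)
  have hlow : ∀ m : ℕ, 1 ≤ m → Real.exp (ρ * m) ≤ nQ E τ R m := fun m hm =>
    nQ_ge_exp hl0 hg_sec hg_part hr1 hR.le hρle hm
  -- choose the time n
  obtain ⟨n, hn₁, hnq1, hratio⟩ := exists_good_time hl0 hg_sec hg_part hr1 hR.le hρ hlow hq1 n₀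
  have hqn : q ≤ n := by omega
  have hn1 : 1 ≤ n := by omega
  have hnpos : (0:ℝ) < (n:ℝ) := by exact_mod_cast hn1
  refine ⟨n, hn₁, hqn, ?_⟩
  -- optimal point and direction
  obtain ⟨z, v, hv, hEq⟩ := nQ_attained (τ := τ) (g := g) hg_sec hg_part R n
  obtain ⟨e, he1, he2⟩ := branches E τ hg_sec hg_part n z
  refine ⟨z.1, z.2, v, hv, ?_⟩
  set T := Finset.univ.filter
    (fun α : Fin n → Fin ℓ => v ∈ (Jacn E τ n (e α)).mulVec '' E.cone R) with hT
  have hTcard : (T.card : ℝ) = nQ E τ R n := by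
    rw [hEq, coneSet_ncard hg_part he1 he2]
  -- derivative pigeonhole
  set cls := fun j : Fin J => T.filter
    (fun α => Real.log (E.derivn n (codePt g α z.1)) / n ∈ Set.Ioo (a j) (b j)) with hcls
  have hclsmem : ∀ α ∈ T, ∃ j, α ∈ cls j := by
    intro α hα
    have hd := derivn_bounds E (by omega) n (codePt g α z.1)
    have hdpos : 0 < E.derivn n (codePt g α z.1) :=
      lt_of_lt_of_le (pow_pos (lt_trans one_pos E.one_lt_lam) n) hd.1
    have hmem : Real.log (E.derivn n (codePt g α z.1)) / n
        ∈ Set.Icc (Real.log E.lam) (Real.log E.Lam) := by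
      constructor
      · rw [le_div_iff₀ hnpos]
        calc Real.log E.lam * n = Real.log (E.lam ^ n) := by rw [Real.log_pow]; ring
        _ ≤ Real.log (E.derivn n (codePt g α z.1)) := Real.log_le_log
            (pow_pos (lt_trans one_pos E.one_lt_lam) n) hd.1
      · rw [div_le_iff₀ hnpos]
        calc Real.log (E.derivn n (codePt g α z.1)) ≤ Real.log (E.Lam ^ n) :=
              Real.log_le_log hdpos hd.2
        _ = Real.log E.Lam * n := by rw [Real.log_pow]; ring
    obtain ⟨S, ⟨j, rfl⟩, hj⟩ := hcover hmem
    exact ⟨j, Finset.mem_filter.mpr ⟨hα, hj⟩⟩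
  have hpig : ∃ j : Fin J, (T.card : ℝ) / J ≤ ((cls j).card : ℝ) := by
    by_contra h
    push_neg at h
    have hsub : T ⊆ Finset.univ.biUnion cls := by
      intro α hα
      obtain ⟨j, hj⟩ := hclsmem α hα
      exact Finset.mem_biUnion.mpr ⟨j, Finset.mem_univ _, hj⟩
    have hsum : (T.card : ℝ) ≤ ∑ j : Fin J, ((cls j).card : ℝ) := by
      calc (T.card:ℝ) ≤ ((Finset.univ.biUnion cls).card : ℝ) := by
            exact_mod_cast Finset.card_le_card hsub
      _ ≤ ∑ j : Fin J, ((cls j).card : ℝ) := by exact_mod_cast Finset.card_biUnion_le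
    have : Nonempty (Fin J) := ⟨⟨0, by omega⟩⟩
    have hlt : ∑ j : Fin J, ((cls j).card : ℝ) < ∑ _j : Fin J, (T.card : ℝ)/J :=
      Finset.sum_lt_sum_of_nonempty Finset.univ_nonempty (fun j _ => h j)
    rw [Finset.sum_const, Finset.card_univ, Fintype.card_fin, nsmul_eq_mul] at hlt
    have : (J:ℝ) * ((T.card:ℝ)/J) = (T.card:ℝ) := by field_simp
    linarith
  obtain ⟨j, hjcard⟩ := hpig
  refine ⟨j, ?_⟩
  set G := cls j with hG
  set Sig := fun β : Fin q → Fin ℓ => G.filter (fun α => trunc α q hqn = β) with hSig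
  set θ : ℝ := Real.exp (ρ * n) * (ℓ:ℝ) ^ (-(q:ℤ)) / (2 * J) with hθ
  have hzpow : (ℓ:ℝ) ^ (-(q:ℤ)) = ((ℓ:ℝ) ^ q)⁻¹ := by
    rw [zpow_neg, zpow_natCast]
  have hlqpos : (0:ℝ) < (ℓ:ℝ)^q := by positivity
  have hθpos : 0 < θ := by
    rw [hθ, hzpow]
    have := Real.exp_pos (ρ * n)
    positivity
  have hℓθ : ((ℓ:ℝ)^q) * θ = Real.exp (ρ * n) / (2*J) := by
    rw [hθ, hzpow]
    field_simp
  set Good := Finset.univ.filter (fun β : Fin q → Fin ℓ => θ ≤ ((Sig β).card : ℝ)) with hGood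
  -- mass identity
  have hGcard : (G.card : ℝ) = ∑ β : Fin q → Fin ℓ, ((Sig β).card : ℝ) := by
    rw [← Nat.cast_sum]
    exact_mod_cast congrArg (Nat.cast (R := ℝ))
      (Finset.card_eq_sum_card_fiberwise (fun α _ => Finset.mem_univ (trunc α q hqn)))
  have hsdiff : ∑ β ∈ Finset.univ \ Good, ((Sig β).card:ℝ)
      + ∑ β ∈ Good, ((Sig β).card:ℝ) = ∑ β : Fin q → Fin ℓ, ((Sig β).card : ℝ) :=
    Finset.sum_sdiff (Finset.subset_univ Good)
  -- bad mass
  have hbad : ∑ β ∈ Finset.univ \ Good, ((Sig β).card:ℝ) ≤ ((ℓ:ℝ)^q) * θ := by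
    have hb : ∀ β ∈ Finset.univ \ Good, ((Sig β).card:ℝ) ≤ θ := by
      intro β hβ
      rw [Finset.mem_sdiff] at hβ
      have h2 := hβ.2
      rw [hGood, Finset.mem_filter] at h2
      push_neg at h2
      exact (h2 (Finset.mem_univ β)).le
    calc ∑ β ∈ Finset.univ \ Good, ((Sig β).card:ℝ)
        ≤ (Finset.univ \ Good).card • θ := Finset.sum_le_card_nsmul _ _ _ hb
    _ = ((Finset.univ \ Good).card : ℝ) * θ := nsmul_eq_mul _ _
    _ ≤ ((ℓ:ℝ)^q) * θ := by
        apply mul_le_mul_of_nonneg_right _ hθpos.le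
        calc (((Finset.univ \ Good).card) : ℝ)
            ≤ ((Finset.univ : Finset (Fin q → Fin ℓ)).card : ℝ) := by
              exact_mod_cast Finset.card_le_card (Finset.sdiff_subset)
        _ = (ℓ:ℝ)^q := by
            rw [Finset.card_univ, Fintype.card_fun, Fintype.card_fin, Fintype.card_fin]
            push_cast
            ring
  -- per-prefix upper bound
  have hper : ∀ β : Fin q → Fin ℓ, ((Sig β).card : ℝ) ≤ nQ E τ R (n - q) := by
    intro β
    apply fiber_card_le hg_sec hg_part hr1 hqn hv he1 β
    intro α hα
    rw [hSig, Finset.mem_filter] at hα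
    obtain ⟨hαG, htr⟩ := hα
    rw [hG, hcls, Finset.mem_filter] at hαG
    have hαT := hαG.1
    rw [hT, Finset.mem_filter] at hαT
    exact ⟨htr, hαT.2⟩
  -- good mass bounds
  have hgoodub : ∑ β ∈ Good, ((Sig β).card:ℝ) ≤ (Good.card : ℝ) * nQ E τ R (n - q) := by
    calc ∑ β ∈ Good, ((Sig β).card:ℝ) ≤ Good.card • nQ E τ R (n - q) :=
          Finset.sum_le_card_nsmul _ _ _ (fun β _ => hper β)
    _ = (Good.card : ℝ) * nQ E τ R (n - q) := nsmul_eq_mul _ _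
  have hGT : (G.card : ℝ) ≥ nQ E τ R n / J := by
    rw [← hTcard]
    exact hjcard
  have hFn := hlow n hn1
  have hFm : 0 < nQ E τ R (n - q) :=
    nQ_pos (τ := τ) (g := g) hl0 hg_sec hg_part hr1 hR0 (n - q)
  have hgoodlb : nQ E τ R n / (2*J) ≤ ∑ β ∈ Good, ((Sig β).card:ℝ) := by
    have h1 : ∑ β ∈ Good, ((Sig β).card:ℝ)
        = (G.card : ℝ) - ∑ β ∈ Finset.univ \ Good, ((Sig β).card:ℝ) := by
      rw [hGcard, ← hsdiff]
      ring
    rw [h1]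
    have h2 : ((ℓ:ℝ)^q) * θ ≤ nQ E τ R n / (2*J) := by
      rw [hℓθ]
      have hinv : (0:ℝ) ≤ (2*(J:ℝ))⁻¹ := by positivity
      simpa [div_eq_mul_inv] using mul_le_mul_of_nonneg_right hFn hinv
    have h3 : nQ E τ R n / J - nQ E τ R n / (2*J) = nQ E τ R n / (2*J) := by
      field_simp
      ring
    linarith
  -- count of good prefixes
  have hGoodcard : (2 * (q+1) * N : ℝ) < (Good.card : ℝ) := by
    have hA : (Good.card : ℝ) * nQ E τ R (n - q) ≥ nQ E τ R n / (2*J) :=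
      le_trans hgoodlb hgoodub
    have hB : nQ E τ R n ≥ nQ E τ R (n - q) * Real.exp ((q:ℝ) * ρ / 2) := hratio
    have hC : (Good.card : ℝ) ≥ Real.exp ((q:ℝ) * ρ / 2) / (2*J) := by
      have h1 : Real.exp ((q:ℝ) * ρ / 2) / (2*J) * nQ E τ R (n - q)
          ≤ (Good.card : ℝ) * nQ E τ R (n - q) := by
        calc Real.exp ((q:ℝ) * ρ / 2) / (2*J) * nQ E τ R (n - q)
            = (nQ E τ R (n - q) * Real.exp ((q:ℝ) * ρ / 2)) / (2*J) := by ring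
        _ ≤ nQ E τ R n / (2*J) := by
            have hinv : (0:ℝ) ≤ (2*(J:ℝ))⁻¹ := by positivity
            simpa [div_eq_mul_inv] using mul_le_mul_of_nonneg_right hB hinv
        _ ≤ (Good.card : ℝ) * nQ E τ R (n - q) := hA
      exact le_of_mul_le_mul_right h1 hFm
    have hexpid : Real.exp (-(q:ℝ) * ρ / 2) * Real.exp ((q:ℝ) * ρ / 2) = 1 := by
      have harg : (-(q:ℝ) * ρ / 2 + (q:ℝ) * ρ / 2) = 0 := by ring
      rw [← Real.exp_add, harg, Real.exp_zero]
    have hqlt : (2 * (q+1) * N : ℝ) < Real.exp ((q:ℝ) * ρ / 2) / (2*J) := by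
      rw [lt_div_iff₀ (by linarith : (0:ℝ) < 2*(J:ℝ))]
      have hexppos := Real.exp_pos ((q:ℝ) * ρ / 2)
      have h1 : ((q:ℝ)+1) * N * Real.exp (-(q:ℝ)*ρ/2) * (4*J) < 1/(4*J) * (4*J) :=
        mul_lt_mul_of_pos_right hq (by linarith)
      have h2 : 1/(4*(J:ℝ)) * (4*J) = 1 := by field_simp
      rw [h2] at h1
      have h3 := mul_lt_mul_of_pos_right h1 hexppos
      rw [one_mul] at h3
      calc (2 * ((q:ℝ)+1) * N) * (2*J)
          = ((q:ℝ)+1) * N * (4*J) * (Real.exp (-(q:ℝ)*ρ/2) * Real.exp ((q:ℝ)*ρ/2)) := by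
            rw [hexpid]; ring
      _ = ((q:ℝ)+1) * N * Real.exp (-(q:ℝ)*ρ/2) * (4*J) * Real.exp ((q:ℝ)*ρ/2) := by ring
      _ < Real.exp ((q:ℝ)*ρ/2) := h3
    linarith
  have hGoodcard' : 2 * (q+1) * N ≤ Good.card := by
    have : (2 * (q+1) * N : ℕ) < Good.card := by exact_mod_cast hGoodcard
    omega
  obtain ⟨B, hBsub, hBcard⟩ := Finset.exists_subset_card_eq hGoodcard'
  refine ⟨B, hBcard, Sig, ?_⟩
  intro β hβ
  have hβGood := hBsub hβ
  rw [hGood, Finset.mem_filter] at hβGood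
  refine ⟨hβGood.2, ?_⟩
  intro α hα
  rw [hSig, Finset.mem_filter] at hα
  obtain ⟨hαG, htr⟩ := hα
  rw [hG, hcls, Finset.mem_filter] at hαG
  obtain ⟨hαT, hαj⟩ := hαG
  rw [hT, Finset.mem_filter] at hαT
  refine ⟨htr, ?_, ?_⟩
  · -- cone condition
    have hJac : Jacn E τ n (e α) = JacnB E τ n (codePt g α z.1) := by
      rw [← (he1 α).2]
      exact JacnB_eq E τ n (e α)
    rw [← hJac]
    exact hαT.2
  · -- derivative pinching
    obtain ⟨hm1, hm2⟩ := hαj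
    have hd := derivn_bounds E (by omega) n (codePt g α z.1)
    have hdpos : 0 < E.derivn n (codePt g α z.1) :=
      lt_of_lt_of_le (pow_pos (lt_trans one_pos E.one_lt_lam) n) hd.1
    constructor
    · have h1 : a j * n < Real.log (E.derivn n (codePt g α z.1)) :=
        (lt_div_iff₀ hnpos).mp hm1
      calc Real.exp (a j * n) ≤ Real.exp (Real.log (E.derivn n (codePt g α z.1))) :=
            Real.exp_le_exp.mpr h1.le
      _ = E.derivn n (codePt g α z.1) := Real.exp_log hdpos
    · have h1 : Real.log (E.derivn n (codePt g α z.1)) < b j * n :=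
        (div_lt_iff₀ hnpos).mp hm2
      calc E.derivn n (codePt g α z.1)
          = Real.exp (Real.log (E.derivn n (codePt g α z.1))) := (Real.exp_log hdpos).symm
      _ ≤ Real.exp (b j * n) := Real.exp_le_exp.mpr h1.le
end
end

section
/- For each pair of dimensions there is a constant C depending only on the dimension of the domain such that: for every surjective affine map M : E → F between Euclidean spaces and every measurable set X ⊂ F, the Lebesgue measure of {z ∈ E : ‖z‖ ≤ 1, M(z) ∈ X} is at most C · Jac(M)^{−1} · Leb_F(X). -/
noncomputable section

open Filter Set Topology MeasureTheory

variable {r ℓ : ℕ}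

namespace Stmt10Aux


lemma exists_adapted_basis {d e : ℕ} (L : EuclideanSpace ℝ (Fin d) →ₗ[ℝ] EuclideanSpace ℝ (Fin e))
    (hL : Function.Surjective L) :
    ∃ b : OrthonormalBasis (Fin d) ℝ (EuclideanSpace ℝ (Fin d)),
      ∀ i : Fin d, e ≤ (i : ℕ) → L (b i) = 0 := by
  set K := LinearMap.ker L with hKdef
  have h1 : e + Module.finrank ℝ K = d := by
    have h1 := LinearMap.finrank_range_add_finrank_ker L
    rw [LinearMap.range_eq_top.mpr hL] at h1
    simpa [finrank_euclideanSpace_fin] using h1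
  have he : e ≤ d := by omega
  rcases Nat.eq_zero_or_pos d with hd | hd
  · refine ⟨EuclideanSpace.basisFun (Fin d) ℝ, fun i _ => ?_⟩
    exact absurd i.isLt (by omega)
  have hdimK : Module.finrank ℝ K = d - e := by omega
  have hdimKo : Module.finrank ℝ Kᗮ = e := by
    have h2 := Submodule.finrank_add_finrank_orthogonal K
    rw [hdimK, finrank_euclideanSpace_fin] at h2
    omega
  let bK : OrthonormalBasis (Fin (d - e)) ℝ K :=
    (stdOrthonormalBasis ℝ K).reindex (finCongr hdimK)
  let bO : OrthonormalBasis (Fin e) ℝ Kᗮ :=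
    (stdOrthonormalBasis ℝ Kᗮ).reindex (finCongr hdimKo)
  let v : Fin d → EuclideanSpace ℝ (Fin d) := fun i =>
    if h : (i : ℕ) < e then (bO ⟨i, h⟩ : EuclideanSpace ℝ (Fin d))
    else (bK ⟨(i : ℕ) - e, by omega⟩ : EuclideanSpace ℝ (Fin d))
  have hmemK : ∀ i : Fin d, e ≤ (i : ℕ) → v i ∈ K := by
    intro i hi
    simp only [v, dif_neg (not_lt.mpr hi)]
    exact (bK _).2
  have hmemKo : ∀ (i : Fin d), (i : ℕ) < e → v i ∈ Kᗮ := by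
    intro i h
    simp only [v, dif_pos h]
    exact (bO _).2
  have hcross : ∀ i j : Fin d, (i : ℕ) < e → e ≤ (j : ℕ) → (inner ℝ (v i) (v j) : ℝ) = 0 := by
    intro i j hi hj
    rw [real_inner_comm]
    exact Submodule.inner_right_of_mem_orthogonal (hmemK j hj) (hmemKo i hi)
  have hon : Orthonormal ℝ v := by
    rw [orthonormal_iff_ite]
    intro i j
    by_cases hi : (i : ℕ) < e <;> by_cases hj : (j : ℕ) < e
    · simp only [v, dif_pos hi, dif_pos hj, ← Submodule.coe_inner]
      rw [orthonormal_iff_ite.mp bO.orthonormal ⟨i, hi⟩ ⟨j, hj⟩]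
      by_cases hij : i = j
      · subst hij; simp
      · rw [if_neg (by simpa [Fin.ext_iff] using hij), if_neg hij]
    · rw [hcross i j hi (not_lt.mp hj), if_neg (by rintro rfl; exact hj hi)]
    · rw [real_inner_comm, hcross j i hj (not_lt.mp hi),
        if_neg (by rintro rfl; exact hi hj)]
    · simp only [v, dif_neg hi, dif_neg hj, ← Submodule.coe_inner]
      rw [orthonormal_iff_ite.mp bK.orthonormal ⟨(i:ℕ)-e, by omega⟩ ⟨(j:ℕ)-e, by omega⟩]
      by_cases hij : i = j
      · subst hij; simp
      · rw [if_neg (by simp only [Fin.mk.injEq]; omega), if_neg hij]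
  have : Nonempty (Fin d) := ⟨⟨0, hd⟩⟩
  let bas : Module.Basis (Fin d) ℝ (EuclideanSpace ℝ (Fin d)) :=
    basisOfLinearIndependentOfCardEqFinrank hon.linearIndependent
      (by simp [finrank_euclideanSpace_fin])
  have hbas : ⇑bas = v := coe_basisOfLinearIndependentOfCardEqFinrank _ _
  refine ⟨bas.toOrthonormalBasis (by rwa [hbas]), fun i hi => ?_⟩
  rw [Module.Basis.coe_toOrthonormalBasis, hbas]
  exact LinearMap.mem_ker.mp (hmemK i hi)


variable {d e : ℕ}

/-- Projection to the first `e` coordinates. -/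
def projE (he : e ≤ d) : EuclideanSpace ℝ (Fin d) →ₗ[ℝ] EuclideanSpace ℝ (Fin e) where
  toFun w := WithLp.toLp 2 (fun j => w (Fin.castLE he j))
  map_add' _ _ := rfl
  map_smul' _ _ := rfl

/-- Extension by zero. -/
def extE (he : e ≤ d) : EuclideanSpace ℝ (Fin e) →ₗ[ℝ] EuclideanSpace ℝ (Fin d) where
  toFun x := WithLp.toLp 2 (fun i => if h : (i : ℕ) < e then x ⟨i, h⟩ else 0)
  map_add' x y := by ext i; by_cases h : (i : ℕ) < e <;> simp [h, PiLp.add_apply]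
  map_smul' c x := by ext i; by_cases h : (i : ℕ) < e <;> simp [h, PiLp.smul_apply]

lemma key_identity {d e : ℕ} (he : e ≤ d) (L : EuclideanSpace ℝ (Fin d) →ₗ[ℝ] EuclideanSpace ℝ (Fin e))
    (b : OrthonormalBasis (Fin d) ℝ (EuclideanSpace ℝ (Fin d)))
    (hb : ∀ i : Fin d, e ≤ (i : ℕ) → L (b i) = 0)
    (w : EuclideanSpace ℝ (Fin d)) :
    L (b.repr.symm (extE he (projE he w))) = L (b.repr.symm w) := by
  rw [← b.sum_repr_symm (extE he (projE he w)), ← b.sum_repr_symm w, map_sum, map_sum]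
  refine Finset.sum_congr rfl fun i _ => ?_
  rw [_root_.map_smul, _root_.map_smul]
  by_cases h : (i : ℕ) < e
  · congr 1
    show (if h' : (i : ℕ) < e then projE he w ⟨i, h'⟩ else 0) = w i
    rw [dif_pos h]
    show w (Fin.castLE he ⟨(i : ℕ), h⟩) = w i
    rfl
  · rw [hb i (not_lt.mp h), smul_zero, smul_zero]

/-- `B`, the invertible factor. -/
noncomputable def Bmap (he : e ≤ d) (L : EuclideanSpace ℝ (Fin d) →ₗ[ℝ] EuclideanSpace ℝ (Fin e))
    (b : OrthonormalBasis (Fin d) ℝ (EuclideanSpace ℝ (Fin d))) :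
    EuclideanSpace ℝ (Fin e) →ₗ[ℝ] EuclideanSpace ℝ (Fin e) :=
  L ∘ₗ (b.repr.symm.toLinearEquiv.toLinearMap) ∘ₗ extE he

lemma L_eq_B_proj {d e : ℕ} (he : e ≤ d)
    (L : EuclideanSpace ℝ (Fin d) →ₗ[ℝ] EuclideanSpace ℝ (Fin e))
    (b : OrthonormalBasis (Fin d) ℝ (EuclideanSpace ℝ (Fin d)))
    (hb : ∀ i : Fin d, e ≤ (i : ℕ) → L (b i) = 0)
    (z : EuclideanSpace ℝ (Fin d)) :
    L z = Bmap he L b (projE he (b.repr z)) := by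
  have := key_identity he L b hb (b.repr z)
  rw [b.repr.symm_apply_apply] at this
  rw [← this]
  rfl

lemma Bmap_surjective {d e : ℕ} (he : e ≤ d)
    (L : EuclideanSpace ℝ (Fin d) →ₗ[ℝ] EuclideanSpace ℝ (Fin e))
    (hL : Function.Surjective L)
    (b : OrthonormalBasis (Fin d) ℝ (EuclideanSpace ℝ (Fin d)))
    (hb : ∀ i : Fin d, e ≤ (i : ℕ) → L (b i) = 0) :
    Function.Surjective (Bmap he L b) := by
  intro y
  obtain ⟨z, hz⟩ := hL y
  exact ⟨projE he (b.repr z), by rw [← L_eq_B_proj he L b hb, hz]⟩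

lemma Bmap_det_ne_zero {d e : ℕ} (he : e ≤ d)
    (L : EuclideanSpace ℝ (Fin d) →ₗ[ℝ] EuclideanSpace ℝ (Fin e))
    (hL : Function.Surjective L)
    (b : OrthonormalBasis (Fin d) ℝ (EuclideanSpace ℝ (Fin d)))
    (hb : ∀ i : Fin d, e ≤ (i : ℕ) → L (b i) = 0) :
    LinearMap.det (Bmap he L b) ≠ 0 := by
  have hsurj := Bmap_surjective he L hL b hb
  have hbij : Function.Bijective (Bmap he L b) :=
    ⟨LinearMap.injective_iff_surjective.mpr hsurj, hsurj⟩
  have := LinearEquiv.isUnit_det' (LinearEquiv.ofBijective _ hbij)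
  rw [show ((LinearEquiv.ofBijective _ hbij : EuclideanSpace ℝ (Fin e) ≃ₗ[ℝ]
    EuclideanSpace ℝ (Fin e)) : EuclideanSpace ℝ (Fin e) →ₗ[ℝ] EuclideanSpace ℝ (Fin e))
    = Bmap he L b from rfl] at this
  exact this.ne_zero


lemma linJac_eq_abs_det {d e : ℕ} (he : e ≤ d)
    (L : EuclideanSpace ℝ (Fin d) →ₗ[ℝ] EuclideanSpace ℝ (Fin e))
    (b : OrthonormalBasis (Fin d) ℝ (EuclideanSpace ℝ (Fin d)))
    (hb : ∀ i : Fin d, e ≤ (i : ℕ) → L (b i) = 0) :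
    linJac L = |LinearMap.det (Bmap he L b)| := by
  classical
  set bd := (EuclideanSpace.basisFun (Fin d) ℝ).toBasis with hbd
  set be := (EuclideanSpace.basisFun (Fin e) ℝ).toBasis with hbe
  set R : EuclideanSpace ℝ (Fin d) →ₗ[ℝ] EuclideanSpace ℝ (Fin d) :=
    b.repr.toLinearEquiv.toLinearMap with hR
  have hdecomp : L = Bmap he L b ∘ₗ (projE he ∘ₗ R) := by
    apply LinearMap.ext
    intro z
    exact L_eq_B_proj he L b hb z
  set MB := LinearMap.toMatrix be be (Bmap he L b) with hMBdef
  set MP := LinearMap.toMatrix bd be (projE he) with hMPdef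
  set MR := LinearMap.toMatrix bd bd R with hMRdef
  have hinner : ∀ x y : EuclideanSpace ℝ (Fin d),
      ∑ k, x k * y k = (inner ℝ x y : ℝ) := by
    intro x y
    rw [PiLp.inner_apply]
    simp [RCLike.inner_apply, mul_comm]
  have hMR : MR.transpose * MR = 1 := by
    ext i i'
    rw [Matrix.mul_apply]
    simp only [Matrix.transpose_apply, hMRdef, LinearMap.toMatrix_apply]
    have hb1 : ∀ (i : Fin d) (k : Fin d), (bd.repr (R (bd i))) k = (b.repr (EuclideanSpace.single i 1)) k := by
      intro i k
      rw [hbd]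
      rw [OrthonormalBasis.coe_toBasis_repr_apply]
      simp [EuclideanSpace.basisFun_repr, hR, OrthonormalBasis.coe_toBasis,
        EuclideanSpace.basisFun_apply]
    simp_rw [hb1]
    rw [hinner, LinearIsometryEquiv.inner_map_map, EuclideanSpace.inner_single_left]
    simp [EuclideanSpace.single_apply, Matrix.one_apply, eq_comm]
  have hMP : MP * MP.transpose = 1 := by
    ext j j'
    rw [Matrix.mul_apply]
    have hmp : ∀ (j : Fin e) (i : Fin d), MP j i = if (Fin.castLE he j) = i then 1 else 0 := by
      intro j i
      rw [hMPdef, LinearMap.toMatrix_apply, hbe, hbd, OrthonormalBasis.coe_toBasis_repr_apply,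
        EuclideanSpace.basisFun_repr, OrthonormalBasis.coe_toBasis, EuclideanSpace.basisFun_apply]
      show (EuclideanSpace.single i (1:ℝ)) (Fin.castLE he j) = _
      rw [EuclideanSpace.single_apply]
    simp only [Matrix.transpose_apply, hmp]
    by_cases hjj : j = j'
    · subst hjj
      simp [Matrix.one_apply]
    · have : ¬ (Fin.castLE he j = Fin.castLE he j') := by
        simpa [Fin.castLE_inj] using hjj
      simp [Matrix.one_apply, hjj, this]
  have hA : LinearMap.toMatrix bd be L = MB * (MP * MR) := by
    rw [hdecomp, LinearMap.toMatrix_comp bd be, LinearMap.toMatrix_comp bd bd]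
  have h1 : MR * MR.transpose = 1 := mul_eq_one_comm.mp hMR
  have key : (MB * (MP * MR)) * (MB * (MP * MR)).transpose = MB * MB.transpose := by
    calc (MB * (MP * MR)) * (MB * (MP * MR)).transpose
        = MB * ((MP * (MR * MR.transpose) * MP.transpose) * MB.transpose) := by
          simp [Matrix.transpose_mul, Matrix.mul_assoc]
      _ = MB * MB.transpose := by rw [h1, Matrix.mul_one, hMP, Matrix.one_mul]
  rw [linJac, gramJac, ← hbd, ← hbe, hA, key, Matrix.det_mul, Matrix.det_transpose,
    ← sq, Real.sqrt_sq_eq_abs, ← LinearMap.det_toMatrix be, ← hMBdef]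

lemma abs_coord_le_norm (n : ℕ) (w : EuclideanSpace ℝ (Fin n)) (i : Fin n) : |w i| ≤ ‖w‖ := by
  rw [EuclideanSpace.norm_eq w, show |w i| = Real.sqrt (‖w i‖ ^ 2) by
    rw [Real.sqrt_sq_eq_abs]; simp [Real.norm_eq_abs]]
  apply Real.sqrt_le_sqrt
  exact Finset.single_le_sum (f := fun j => ‖w j‖ ^ 2) (fun j _ => sq_nonneg _) (Finset.mem_univ i)

end Stmt10Aux

/-- For each dimension `d` of the domain there is a constant `C > 0`
(depending only on `d`) such that for every surjective affine map
`M : ℝ^d → ℝ^e` between Euclidean spaces and every measurable `X ⊆ ℝ^e`,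
`Leb {z : ‖z‖ ≤ 1, M z ∈ X} ≤ C ⬝ Jac(M)⁻¹ ⬝ Leb(X)`. -/
theorem stmt10 (d : ℕ) :
    ∃ C : ℝ, 0 < C ∧
      ∀ (e : ℕ) (M : EuclideanSpace ℝ (Fin d) →ᵃ[ℝ] EuclideanSpace ℝ (Fin e)),
        Function.Surjective M →
        ∀ X : Set (EuclideanSpace ℝ (Fin e)), MeasurableSet X →
          volume {z : EuclideanSpace ℝ (Fin d) | ‖z‖ ≤ 1 ∧ M z ∈ X} ≤
            ENNReal.ofReal (C * (linJac M.linear)⁻¹) * volume X := by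
  classical
  refine ⟨2 ^ d, by positivity, ?_⟩
  intro e M hM X hX
  set L := M.linear with hLdef
  have hML : ∀ z, M z = L z + M 0 := by
    intro z
    conv_lhs => rw [AffineMap.decomp M]
    rfl
  have hL : Function.Surjective L := by
    intro y
    obtain ⟨z, hz⟩ := hM (y + M 0)
    refine ⟨z, ?_⟩
    have h2 : L z + M 0 = y + M 0 := ((hML z).symm.trans hz)
    exact add_right_cancel h2
  have he : e ≤ d := by
    have h1 := LinearMap.finrank_range_add_finrank_ker L
    rw [LinearMap.range_eq_top.mpr hL] at h1
    simp [finrank_euclideanSpace_fin] at h1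
    omega
  obtain ⟨b, hb⟩ := Stmt10Aux.exists_adapted_basis L hL
  set B := Stmt10Aux.Bmap he L b with hBdef
  have hdet : LinearMap.det B ≠ 0 := Stmt10Aux.Bmap_det_ne_zero he L hL b hb
  have hlin : linJac L = |LinearMap.det B| := Stmt10Aux.linJac_eq_abs_det he L b hb
  set c := M 0 with hcdef
  set X' : Set (EuclideanSpace ℝ (Fin e)) := (fun y => y + c) ⁻¹' X with hX'def
  have hX'meas : MeasurableSet X' := hX.preimage (measurable_add_const c)
  have hX'vol : volume X' = volume X := measure_preimage_add_right volume c X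
  have hBP : Continuous fun w : EuclideanSpace ℝ (Fin d) => B (Stmt10Aux.projE he w) :=
    (B ∘ₗ Stmt10Aux.projE he).continuous_of_finiteDimensional
  set T : Set (EuclideanSpace ℝ (Fin d)) :=
    {w | ‖w‖ ≤ 1 ∧ B (Stmt10Aux.projE he w) ∈ X'} with hTdef
  have hTmeas : MeasurableSet T := by
    rw [hTdef, setOf_and]
    exact ((isClosed_le continuous_norm continuous_const).measurableSet).inter
      (hBP.measurable hX'meas)
  have hSeq : {z : EuclideanSpace ℝ (Fin d) | ‖z‖ ≤ 1 ∧ M z ∈ X} = ⇑b.repr ⁻¹' T := by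
    ext z
    simp only [mem_setOf_eq, mem_preimage, hTdef]
    have h1 : ‖b.repr z‖ = ‖z‖ := b.repr.norm_map z
    have h2 : B (Stmt10Aux.projE he (b.repr z)) = L z :=
      (Stmt10Aux.L_eq_B_proj he L b hb z).symm
    rw [h1, h2]
    exact and_congr Iff.rfl (by rw [hML z]; exact Iff.rfl)
  have hvolS : volume {z : EuclideanSpace ℝ (Fin d) | ‖z‖ ≤ 1 ∧ M z ∈ X} = volume T := by
    rw [hSeq]
    exact b.measurePreserving_repr.measure_preimage hTmeas.nullMeasurableSet
  set T2 : Set (EuclideanSpace ℝ (Fin d)) :=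
    {w | B (Stmt10Aux.projE he w) ∈ X' ∧ ∀ i, |w i| ≤ 1} with hT2def
  have hTT2 : T ⊆ T2 := by
    rintro w ⟨hw1, hw2⟩
    exact ⟨hw2, fun i => le_trans (Stmt10Aux.abs_coord_le_norm d w i) hw1⟩
  have hev : ∀ i, Measurable fun w : EuclideanSpace ℝ (Fin d) => w i := fun i =>
    (measurable_pi_apply i).comp ((MeasurableEquiv.toLp 2 (Fin d → ℝ)).symm).measurable
  have hT2meas : MeasurableSet T2 := by
    rw [hT2def, setOf_and]
    refine (hBP.measurable hX'meas).inter ?_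
    rw [show {w : EuclideanSpace ℝ (Fin d) | ∀ i, |w i| ≤ 1}
        = ⋂ i, {w : EuclideanSpace ℝ (Fin d) | |w i| ≤ 1} by ext w; simp]
    exact MeasurableSet.iInter fun i => measurableSet_le (hev i).abs measurable_const
  set U : Set (Fin d → ℝ) := ⇑((MeasurableEquiv.toLp 2 (Fin d → ℝ)).symm).symm ⁻¹' T2 with hUdef
  have hvolU : volume U = volume T2 :=
    (MeasurePreserving.symm _
      (EuclideanSpace.volume_preserving_symm_measurableEquiv_toLp (Fin d))).measure_preimage
      hT2meas.nullMeasurableSet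
  set p : Fin d → Prop := fun i => (i : ℕ) < e with hpdef
  have hpd : DecidablePred p := fun i => Nat.decLt _ _
  let q : Fin e ≃ {i : Fin d // p i} :=
    { toFun := fun j => ⟨Fin.castLE he j, by simpa [hpdef] using j.isLt⟩
      invFun := fun i => ⟨(i : Fin d), i.2⟩
      left_inv := fun j => rfl
      right_inv := fun i => Subtype.ext (Fin.ext rfl) }
  set G : ({i : Fin d // p i} → ℝ) → EuclideanSpace ℝ (Fin e) := fun y =>
    ((MeasurableEquiv.toLp 2 (Fin e → ℝ)).symm).symm (fun j => y (q j)) with hGdef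
  have hGmeas : Measurable G :=
    ((MeasurableEquiv.toLp 2 (Fin e → ℝ)).symm).symm.measurable.comp
      (measurable_pi_lambda _ (fun j => measurable_pi_apply (q j)))
  have hBmeasSet : MeasurableSet (⇑B ⁻¹' X') :=
    (B.continuous_of_finiteDimensional).measurable hX'meas
  set T3 : Set ({i : Fin d // p i} → ℝ) := G ⁻¹' (⇑B ⁻¹' X') with hT3def
  have hT3meas : MeasurableSet T3 := hGmeas hBmeasSet
  set Box : Set ({i : Fin d // ¬ p i} → ℝ) := univ.pi (fun _ => Icc (-1:ℝ) 1) with hBoxdef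
  have hBoxmeas : MeasurableSet Box := MeasurableSet.univ_pi fun _ => measurableSet_Icc
  set ep := MeasurableEquiv.piEquivPiSubtypeProd (fun _ : Fin d => ℝ) p with hepdef
  have hUsub : U ⊆ ⇑ep ⁻¹' (T3 ×ˢ Box) := by
    intro u hu
    obtain ⟨hu1, hu2⟩ := hu
    rw [mem_preimage, Set.mem_prod]
    refine ⟨hu1, ?_⟩
    intro i _
    exact abs_le.mp (hu2 i.1)
  have hvolprod : volume (⇑ep ⁻¹' (T3 ×ˢ Box)) ≤ volume T3 * volume Box := by
    rw [show (volume : Measure (Fin d → ℝ)) = Measure.pi fun _ => volume from rfl,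
      (measurePreserving_piEquivPiSubtypeProd (fun _ : Fin d => (volume : Measure ℝ)) p).measure_preimage
        ((hT3meas.prod hBoxmeas)).nullMeasurableSet]
    exact le_of_eq (Measure.prod_prod T3 Box)
  have hvolBox : volume Box ≤ 2 ^ d := by
    rw [hBoxdef, volume_pi_pi]
    have : ∀ _i : {i : Fin d // ¬ p i}, volume (Icc (-1:ℝ) 1) = 2 := by
      intro _
      rw [Real.volume_Icc]
      norm_num
    rw [Finset.prod_congr rfl (fun i _ => this i), Finset.prod_const]
    apply pow_le_pow_right₀ one_le_two
    simpa using le_trans (Fintype.card_subtype_le _) (le_of_eq (Fintype.card_fin d))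
  have hpcl : MeasurePreserving
      (MeasurableEquiv.piCongrLeft (fun _ : {i : Fin d // p i} => ℝ) q) volume volume :=
    volume_measurePreserving_piCongrLeft (fun _ => ℝ) q
  have hpre : ⇑(MeasurableEquiv.piCongrLeft (fun _ : {i : Fin d // p i} => ℝ) q) ⁻¹' T3
      = ⇑((MeasurableEquiv.toLp 2 (Fin e → ℝ)).symm).symm ⁻¹' (⇑B ⁻¹' X') := by
    ext x
    simp only [mem_preimage, hT3def, hGdef]
    have hx : (fun j => (MeasurableEquiv.piCongrLeft (fun _ : {i : Fin d // p i} => ℝ) q) x (q j)) = x := by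
      funext j
      exact Equiv.piCongrLeft_apply_apply (fun _ => ℝ) q x j
    rw [hx]
  have hvolT3 : volume T3 = ENNReal.ofReal |(LinearMap.det B)⁻¹| * volume X := by
    rw [← hpcl.measure_preimage hT3meas.nullMeasurableSet, hpre,
      (MeasurePreserving.symm _
        (EuclideanSpace.volume_preserving_symm_measurableEquiv_toLp (Fin e))).measure_preimage
        hBmeasSet.nullMeasurableSet,
      Measure.addHaar_preimage_linearMap volume hdet, hX'vol]
  have habs : |(LinearMap.det B)⁻¹| = (linJac L)⁻¹ := by
    rw [abs_inv, hlin]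
  calc volume {z : EuclideanSpace ℝ (Fin d) | ‖z‖ ≤ 1 ∧ M z ∈ X}
      = volume T := hvolS
    _ ≤ volume T2 := measure_mono hTT2
    _ = volume U := hvolU.symm
    _ ≤ volume (⇑ep ⁻¹' (T3 ×ˢ Box)) := measure_mono hUsub
    _ ≤ volume T3 * volume Box := hvolprod
    _ ≤ (ENNReal.ofReal ((linJac L)⁻¹) * volume X) * 2 ^ d := by
        rw [hvolT3, habs]
        exact mul_le_mul_right hvolBox _
    _ = ENNReal.ofReal ((2:ℝ) ^ d * (linJac L)⁻¹) * volume X := by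
        rw [ENNReal.ofReal_mul (by positivity), ENNReal.ofReal_pow (by norm_num),
          ENNReal.ofReal_ofNat]
        ring
end
end
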